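/- arXiv:1001.5437 — 3 statements merged into one kernel-verified Lean document; each statement's English description precedes it below -/
import Mathlib

section
/- A triangulation S of C(m,2d) is uniquely determined by its set of d-dimensional faces. More precisely, the faces of S of dimension at least d are exactly those simplices all of whose d-faces are either non-separated (lying on a lower boundary facet) or contained in e(S). -/
open Finset

/-- The point `p_t = (t, t², …, t^D)` on the moment curve in `ℝ^D`. -/
noncomputable def momentPt (D : ℕ) (t : ℝ) : EuclideanSpace ℝ (Fin D) :=
  WithLp.toLp 2 (fun i : Fin D => t ^ (i.1 + 1))

/-- `X` intertwines `Y`: `x₀ < y₀ < x₁ < y₁ < ⋯ < x_d < y_d`. -/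
def Intw {n : ℕ} {α : Type*} [LT α] (X Y : Fin n → α) : Prop :=
  (∀ i, X i < Y i) ∧ ∀ i j : Fin n, i.1 + 1 = j.1 → Y i < X j

/-- A collection of tuples is non-intertwining if no pair intertwines (in either order). -/
def NonIntw {n : ℕ} {α : Type*} [LT α] (R : Set (Fin n → α)) : Prop :=
  ∀ X ∈ R, ∀ Y ∈ R, ¬ Intw X Y

/-- A separated `(d+1)`-tuple from `{1,…,m}`: increasing with consecutive gaps at least 2. -/
def SepTuple (d m : ℕ) (A : Fin (d+1) → ℕ) : Prop :=
  (∀ x, 1 ≤ A x ∧ A x ≤ m) ∧ ∀ i j : Fin (d+1), i.1 + 1 = j.1 → A i + 2 ≤ A j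

/-- The vertex of the cyclic polytope `C(m,2d)` with label `i+1`. -/
noncomputable def cycVert (d m : ℕ) (i : Fin m) : EuclideanSpace ℝ (Fin (2*d)) :=
  momentPt (2*d) (i.1 + 1)

/-- The convex hull of the vertices of `C(m,2d)` indexed by a finite set `B`. -/
noncomputable def cycHull (d m : ℕ) (B : Finset (Fin m)) : Set (EuclideanSpace ℝ (Fin (2*d))) :=
  convexHull ℝ (cycVert d m '' (B : Set (Fin m)))

/-- The cyclic polytope `C(m,2d)`. -/
noncomputable def cycPoly (d m : ℕ) : Set (EuclideanSpace ℝ (Fin (2*d))) :=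
  convexHull ℝ (Set.range (cycVert d m))

/-- A triangulation of `C(m,2d)`: a collection of `2d`-simplices on the vertices which
covers the polytope and in which any two simplices meet along a common face. -/
def IsTriang (d m : ℕ) (S : Finset (Finset (Fin m))) : Prop :=
  (∀ B ∈ S, B.card = 2*d+1) ∧
  (∀ B ∈ S, AffineIndependent ℝ (fun v : B => cycVert d m v)) ∧
  (⋃ B ∈ S, cycHull d m B) = cycPoly d m ∧
  ∀ B₁ ∈ S, ∀ B₂ ∈ S, cycHull d m B₁ ∩ cycHull d m B₂ = cycHull d m (B₁ ∩ B₂)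

/-- A separated subset of vertices: no two consecutive labels. -/
def SepFinset (m : ℕ) (F : Finset (Fin m)) : Prop :=
  ∀ i ∈ F, ∀ j ∈ F, (j : Fin m).1 ≠ (i : Fin m).1 + 1

/-- `e(S)` as a set of vertex subsets: separated `(d+1)`-element faces of the triangulation. -/
def eSetF (d m : ℕ) (S : Finset (Finset (Fin m))) : Set (Finset (Fin m)) :=
  {F | F.card = d + 1 ∧ SepFinset m F ∧ ∃ B ∈ S, F ⊆ B}



namespace CycAux
open Polynomial
variable {d m : ℕ}

noncomputable def lab (v : Fin m) : ℝ := v.1 + 1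

lemma cycVert_apply (v : Fin m) (k : Fin (2*d)) : cycVert d m v k = lab v ^ (k.1+1) := rfl

lemma lab_strictMono : StrictMono (lab (m := m)) := fun a b h => by
  simp only [lab]
  have : (a.1 : ℝ) < b.1 := by exact_mod_cast h
  linarith

lemma lab_injective : Function.Injective (lab (m := m)) := lab_strictMono.injective

lemma sum_coord (A : Finset (Fin m)) (γ : Fin m → ℝ) (k : Fin (2*d)) :
    (∑ v ∈ A, γ v • cycVert d m v) k = ∑ v ∈ A, γ v * lab v ^ (k.1+1) := by
  rw [WithLp.ofLp_sum, Finset.sum_apply]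
  simp [cycVert_apply, PiLp.smul_apply, smul_eq_mul]


lemma eval_zero {ι : Type*} [Fintype ι] (t w : ι → ℝ)
    (hp : ∀ k ≤ 2*d, ∑ i, w i * t i ^ k = 0)
    (q : Polynomial ℝ) (hq : q.natDegree ≤ 2*d) :
    ∑ i, w i * q.eval (t i) = 0 := by
  have hev : ∀ i, q.eval (t i) = ∑ k ∈ Finset.range (2*d+1), q.coeff k * t i ^ k := fun i =>
    Polynomial.eval_eq_sum_range' (lt_of_le_of_lt hq (Nat.lt_succ_self _)) _
  calc ∑ i, w i * q.eval (t i)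
      = ∑ k ∈ Finset.range (2*d+1), q.coeff k * ∑ i, w i * t i ^ k := by
        simp_rw [hev, Finset.mul_sum]
        rw [Finset.sum_comm]
        refine Finset.sum_congr rfl fun k _ => ?_
        exact Finset.sum_congr rfl fun i _ => by ring
    _ = 0 := by
        apply Finset.sum_eq_zero; intro k hk
        rw [hp k (Nat.lt_succ_iff.mp (Finset.mem_range.mp hk)), mul_zero]

lemma zero_of_small {ι : Type*} [Fintype ι] [DecidableEq ι] (t w : ι → ℝ)
    (ht : Function.Injective t)
    (hp : ∀ k ≤ 2*d, ∑ i, w i * t i ^ k = 0)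
    (hcard : (Finset.univ.filter (fun i => w i ≠ 0)).card ≤ 2*d+1) :
    ∀ i, w i = 0 := by
  intro i₀
  by_contra h0
  set A := Finset.univ.filter (fun i => w i ≠ 0) with hA
  have hi₀ : i₀ ∈ A := by simp [hA, h0]
  set q : Polynomial ℝ := ∏ u ∈ A.erase i₀, (X - C (t u)) with hq
  have hdeg : q.natDegree ≤ 2*d := by
    have h1 : q.natDegree = ∑ u ∈ A.erase i₀, (X - C (t u)).natDegree :=
      Polynomial.natDegree_prod _ _ (fun u _ => Polynomial.X_sub_C_ne_zero (t u))
    rw [h1]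
    simp only [Polynomial.natDegree_X_sub_C, Finset.sum_const, smul_eq_mul, mul_one]
    have := Finset.card_erase_of_mem hi₀
    omega
  have hz := eval_zero t w hp q hdeg
  have hsum : ∑ i, w i * q.eval (t i) = w i₀ * q.eval (t i₀) := by
    rw [← Finset.sum_subset (Finset.subset_univ A) (fun u _ hu => by
      have hwu : w u = 0 := by simpa [hA] using hu
      rw [hwu, zero_mul])]
    apply Finset.sum_eq_single_of_mem i₀ hi₀
    intro u hu hne
    have hev : q.eval (t u) = 0 := by
      rw [hq, Polynomial.eval_prod]
      apply Finset.prod_eq_zero (Finset.mem_erase.mpr ⟨hne, hu⟩)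
      simp
    rw [hev, mul_zero]
  have hqe : q.eval (t i₀) ≠ 0 := by
    rw [hq, Polynomial.eval_prod]
    apply Finset.prod_ne_zero_iff.mpr
    intro u hu
    simp only [Polynomial.eval_sub, Polynomial.eval_X, Polynomial.eval_C, sub_ne_zero]
    exact fun hc => (Finset.mem_erase.mp hu).1 (ht hc.symm)
  rw [hsum] at hz
  rcases mul_eq_zero.mp hz with h | h
  · exact h0 h
  · exact hqe h

lemma adj_sign (t w : Fin (2*d+2) → ℝ) (ht : StrictMono t)
    (hp : ∀ k ≤ 2*d, ∑ i, w i * t i ^ k = 0) (hw : ∀ i, w i ≠ 0)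
    (i j : Fin (2*d+2)) (hij : i.1 + 1 = j.1) : w i * w j < 0 := by
  have hne : i ≠ j := by intro h; rw [h] at hij; omega
  set A := (Finset.univ.erase i).erase j with hA
  have hiA : i ∉ A := by simp [hA]
  have hjA : j ∉ A := by simp [hA]
  have hmemA : ∀ u, u ∈ A ↔ u ≠ j ∧ u ≠ i := by intro u; simp [hA]
  set q : Polynomial ℝ := ∏ u ∈ A, (X - C (t u)) with hq
  have hjne : j ≠ i := by intro h; rw [h] at hij; omega
  have hcardA : A.card = 2*d := by
    rw [hA, Finset.card_erase_of_mem (Finset.mem_erase.mpr ⟨hjne, Finset.mem_univ j⟩),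
      Finset.card_erase_of_mem (Finset.mem_univ i), Finset.card_univ, Fintype.card_fin]
    omega
  have hdeg : q.natDegree ≤ 2*d := by
    have h1 : q.natDegree = ∑ u ∈ A, (X - C (t u)).natDegree :=
      Polynomial.natDegree_prod _ _ (fun u _ => Polynomial.X_sub_C_ne_zero (t u))
    rw [h1]
    simp only [Polynomial.natDegree_X_sub_C, Finset.sum_const, smul_eq_mul, mul_one, hcardA]
    omega
  have hz := eval_zero t w hp q hdeg
  have huniv : (Finset.univ : Finset (Fin (2*d+2))) = insert i (insert j A) := by
    ext u
    simp only [Finset.mem_univ, true_iff, Finset.mem_insert, hmemA u]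
    by_cases h1 : u = i
    · tauto
    · by_cases h2 : u = j <;> tauto
  have hrootsA : ∀ u ∈ A, q.eval (t u) = 0 := by
    intro u hu
    rw [hq, Polynomial.eval_prod]
    apply Finset.prod_eq_zero hu
    simp
  have heq : w i * q.eval (t i) + w j * q.eval (t j) = 0 := by
    rw [huniv] at hz
    rw [Finset.sum_insert (by simp [Finset.mem_insert]; exact ⟨hne, hiA⟩),
      Finset.sum_insert hjA] at hz
    rw [Finset.sum_eq_zero (fun u hu => by rw [hrootsA u hu, mul_zero])] at hz
    linarith
  have hqq : 0 < q.eval (t i) * q.eval (t j) := by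
    rw [hq, Polynomial.eval_prod, Polynomial.eval_prod, ← Finset.prod_mul_distrib]
    apply Finset.prod_pos
    intro u hu
    simp only [Polynomial.eval_sub, Polynomial.eval_X, Polynomial.eval_C]
    rcases (hmemA u).mp hu with ⟨huj, hui⟩
    have : u.1 < i.1 ∨ j.1 < u.1 := by
      have h1 : u.1 ≠ i.1 := fun h => hui (Fin.ext h)
      have h2 : u.1 ≠ j.1 := fun h => huj (Fin.ext h)
      omega
    rcases this with h | h
    · have h1 : t u < t i := ht (by exact h)
      have h2 : t u < t j := ht (by omega)
      exact mul_pos (by linarith) (by linarith)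
    · have h1 : t i < t u := ht (by omega)
      have h2 : t j < t u := ht (by exact h)
      exact mul_pos_of_neg_of_neg (by linarith) (by linarith)
  have hwi2 : 0 < (w i)^2 := lt_of_le_of_ne (sq_nonneg _) (Ne.symm (pow_ne_zero 2 (hw i)))
  have hrj2 : 0 < (q.eval (t j))^2 := by
    have : q.eval (t j) ≠ 0 := fun h => by rw [h, mul_zero] at hqq; exact lt_irrefl 0 hqq
    exact lt_of_le_of_ne (sq_nonneg _) (Ne.symm (pow_ne_zero 2 this))
  have key2 : w i * w j * (q.eval (t j))^2 = -((w i)^2 * (q.eval (t i) * q.eval (t j))) := by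
    linear_combination (w i * q.eval (t j)) * heq
  have hneg : w i * w j * (q.eval (t j))^2 < 0 := by
    rw [key2]; nlinarith [hwi2, hqq]
  by_contra hcon
  push_neg at hcon
  nlinarith [mul_nonneg hcon hrj2.le]

lemma dep_alt (D : Finset (Fin m)) (hD : D.card = 2*d+2) :
    ∃ η : Fin m → ℝ,
      (∀ v, v ∉ D → η v = 0) ∧
      (∀ k, k ≤ 2*d → ∑ v, η v * lab v ^ k = 0) ∧
      (Finset.univ.filter (fun v => 0 < η v)).card = d+1 ∧
      (Finset.univ.filter (fun v => η v < 0)).card = d+1 ∧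
      SepFinset m (Finset.univ.filter (fun v => 0 < η v)) ∧
      SepFinset m (Finset.univ.filter (fun v => η v < 0)) ∧
      (Finset.univ.filter (fun v => 0 < η v)) ∪ (Finset.univ.filter (fun v => η v < 0)) = D := by
  classical
  set o := D.orderIsoOfFin hD with ho
  set t : Fin (2*d+2) → ℝ := fun i => lab (o i).1 with hts
  have hto : StrictMono t := fun a b hab =>
    lab_strictMono (Subtype.coe_lt_coe.mpr (o.strictMono hab))
  set V : Fin (2*d+2) → (Fin (2*d+1) → ℝ) := fun i k => t i ^ k.1 with hV
  have hnli : ¬ LinearIndependent ℝ V := by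
    intro h
    have := h.fintype_card_le_finrank
    rw [Module.finrank_fintype_fun_eq_card] at this
    simp only [Fintype.card_fin] at this
    omega
  obtain ⟨g, hg0, i₁, hgi₁⟩ := Fintype.not_linearIndependent_iff.mp hnli
  have hp : ∀ k, k ≤ 2*d → ∑ i, g i * t i ^ k = 0 := by
    intro k hk
    have h2 := congrFun hg0 ⟨k, by omega⟩
    rw [Finset.sum_apply] at h2
    simpa [hV, smul_eq_mul] using h2
  have hfull : ∀ i, g i ≠ 0 := by
    intro i hgi
    have hsub : (Finset.univ.filter (fun j => g j ≠ 0)) ⊆ Finset.univ.erase i := by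
      intro j hj
      rcases Finset.mem_filter.mp hj with ⟨-, hj2⟩
      exact Finset.mem_erase.mpr ⟨fun h => hj2 (h ▸ hgi), Finset.mem_univ j⟩
    have hcard : (Finset.univ.filter (fun j => g j ≠ 0)).card ≤ 2*d+1 := by
      have h3 := Finset.card_le_card hsub
      rw [Finset.card_erase_of_mem (Finset.mem_univ i), Finset.card_univ, Fintype.card_fin] at h3
      omega
    exact hgi₁ (zero_of_small t g hto.injective hp hcard i₁)
  have halt : ∀ i j : Fin (2*d+2), i.1 + 1 = j.1 → g i * g j < 0 :=
    adj_sign t g hto hp hfull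
  set z0 : Fin (2*d+2) := ⟨0, by omega⟩ with hz0
  set g' : Fin (2*d+2) → ℝ := if 0 < g z0 then g else fun i => -(g i) with hg'
  have hp' : ∀ k, k ≤ 2*d → ∑ i, g' i * t i ^ k = 0 := by
    intro k hk; rw [hg']; split
    · exact hp k hk
    · simp only [neg_mul, Finset.sum_neg_distrib]
      rw [hp k hk, neg_zero]
  have hfull' : ∀ i, g' i ≠ 0 := by
    intro i; rw [hg']; split
    · exact hfull i
    · exact neg_ne_zero.mpr (hfull i)
  have halt' : ∀ i j : Fin (2*d+2), i.1 + 1 = j.1 → g' i * g' j < 0 := by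
    intro i j hij; rw [hg']; split
    · exact halt i j hij
    · simpa [neg_mul_neg] using halt i j hij
  have hpos0 : 0 < g' z0 := by
    rw [hg']; split
    · assumption
    · next h =>
      push_neg at h
      exact neg_pos.mpr (lt_of_le_of_ne h (hfull z0))
  have hsignAux : ∀ n (h : n < 2*d+2), (0 < g' ⟨n, h⟩ ↔ Even n) := by
    intro n
    induction n with
    | zero => intro h; exact iff_of_true hpos0 ⟨0, rfl⟩
    | succ k ih =>
      intro h
      have hk : k < 2*d+2 := by omega
      have hadj := halt' ⟨k, hk⟩ ⟨k+1, h⟩ rfl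
      have ihk := ih hk
      rcases lt_trichotomy (g' ⟨k, hk⟩) 0 with hneg | hzero | hpos
      · have h2 : 0 < g' ⟨k+1, h⟩ := by nlinarith
        have h3 : ¬ Even k := fun he => absurd (ihk.mpr he) (not_lt.mpr hneg.le)
        exact iff_of_true h2 (Nat.even_add_one.mpr h3)
      · exact absurd hzero (hfull' _)
      · have h2 : g' ⟨k+1, h⟩ < 0 := by nlinarith
        have h3 : Even k := ihk.mp hpos
        exact iff_of_false (not_lt.mpr h2.le) (by rw [Nat.even_add_one]; exact not_not.mpr h3)
  have hsign : ∀ i : Fin (2*d+2), (0 < g' i ↔ Even i.1) := fun i => by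
    have := hsignAux i.1 i.2
    simpa using this
  have hsignN : ∀ i : Fin (2*d+2), (g' i < 0 ↔ ¬ Even i.1) := by
    intro i
    constructor
    · intro h he
      exact absurd ((hsign i).mpr he) (not_lt.mpr h.le)
    · intro he
      rcases lt_trichotomy (g' i) 0 with h | h | h
      · exact h
      · exact absurd h (hfull' i)
      · exact absurd ((hsign i).mp h) he
  have hcardE : (Finset.univ.filter (fun i : Fin (2*d+2) => Even i.1)).card = d+1 := by
    have himg : Finset.univ.filter (fun i : Fin (2*d+2) => Even i.1)
        = Finset.univ.image (fun j : Fin (d+1) => (⟨2*j.1, by omega⟩ : Fin (2*d+2))) := by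
      ext u
      rw [Finset.mem_filter, Finset.mem_image]
      constructor
      · rintro ⟨-, c, hc⟩
        have hu2 : u.1 < 2*d+2 := u.2
        refine ⟨⟨c, by omega⟩, Finset.mem_univ _, Fin.ext ?_⟩
        show 2 * c = u.1
        omega
      · rintro ⟨j, -, rfl⟩
        exact ⟨Finset.mem_univ _, j.1, two_mul j.1⟩
    rw [himg, Finset.card_image_of_injective _ (fun a b hab => by
      apply Fin.ext
      have := congrArg Fin.val hab
      simp at this
      omega)]
    simp
  have hcardO : (Finset.univ.filter (fun i : Fin (2*d+2) => ¬ Even i.1)).card = d+1 := by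
    have h3 := Finset.card_filter_add_card_filter_not
      (s := (Finset.univ : Finset (Fin (2*d+2)))) (p := fun i => Even i.1)
    rw [hcardE, Finset.card_univ, Fintype.card_fin] at h3
    omega
  set η : Fin m → ℝ := fun v => if h : v ∈ D then g' (o.symm ⟨v, h⟩) else 0 with hη
  have hsupp : ∀ v, v ∉ D → η v = 0 := fun v hv => dif_neg hv
  have hηv : ∀ v (h : v ∈ D), η v = g' (o.symm ⟨v, h⟩) := fun v h => dif_pos h
  have hηo : ∀ i, η (o i).1 = g' i := by
    intro i
    rw [hηv (o i).1 (o i).2]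
    congr 1
    have h4 : (⟨(o i).1, (o i).2⟩ : {x // x ∈ D}) = o i := Subtype.ext rfl
    rw [h4, OrderIso.symm_apply_apply]
  have hsum : ∀ k, k ≤ 2*d → ∑ v, η v * lab v ^ k = 0 := by
    intro k hk
    have h5 : ∑ v ∈ D, η v * lab v ^ k = ∑ v, η v * lab v ^ k :=
      Finset.sum_subset (Finset.subset_univ D) (fun v _ hv => by rw [hsupp v hv, zero_mul])
    rw [← h5, ← Finset.sum_coe_sort D (fun v => η v * lab v ^ k),
      ← Equiv.sum_comp o.toEquiv (fun x : {x // x ∈ D} => η x.1 * lab x.1 ^ k)]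
    have h6 : ∀ i, η (o.toEquiv i).1 * lab (o.toEquiv i).1 ^ k = g' i * t i ^ k := by
      intro i
      rw [show o.toEquiv i = o i from rfl, hηo i, hts]
    rw [Finset.sum_congr rfl (fun i _ => h6 i)]
    exact hp' k hk
  have hPimg : Finset.univ.filter (fun v => 0 < η v)
      = (Finset.univ.filter (fun i : Fin (2*d+2) => Even i.1)).image (fun i => (o i).1) := by
    ext v
    simp only [Finset.mem_filter, Finset.mem_univ, true_and, Finset.mem_image]
    constructor
    · intro hv
      have hvD : v ∈ D := by
        by_contra hvD
        rw [hsupp v hvD] at hv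
        exact lt_irrefl 0 hv
      refine ⟨o.symm ⟨v, hvD⟩, (hsign _).mp (by rwa [← hηv v hvD]), ?_⟩
      rw [OrderIso.apply_symm_apply]
    · rintro ⟨i, hi, rfl⟩
      rw [hηo i]
      exact (hsign i).mpr hi
  have hNimg : Finset.univ.filter (fun v => η v < 0)
      = (Finset.univ.filter (fun i : Fin (2*d+2) => ¬ Even i.1)).image (fun i => (o i).1) := by
    ext v
    simp only [Finset.mem_filter, Finset.mem_univ, true_and, Finset.mem_image]
    constructor
    · intro hv
      have hvD : v ∈ D := by
        by_contra hvD
        rw [hsupp v hvD] at hv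
        exact lt_irrefl 0 hv
      refine ⟨o.symm ⟨v, hvD⟩, (hsignN _).mp (by rwa [← hηv v hvD]), ?_⟩
      rw [OrderIso.apply_symm_apply]
    · rintro ⟨i, hi, rfl⟩
      rw [hηo i]
      exact (hsignN i).mpr hi
  have hoinj : Function.Injective (fun i : Fin (2*d+2) => (o i).1) :=
    fun a b hab => o.injective (Subtype.ext hab)
  have hsepKey : ∀ I : Finset (Fin (2*d+2)),
      (∀ i ∈ I, ∀ j ∈ I, i < j → i.1+1 < j.1) →
      SepFinset m (I.image (fun i => (o i).1)) := by
    intro I hI v hv w hw hEq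
    obtain ⟨i, hi, rfl⟩ := Finset.mem_image.mp hv
    obtain ⟨j, hj, rfl⟩ := Finset.mem_image.mp hw
    have hij : i < j := by
      rcases lt_trichotomy i j with h | h | h
      · exact h
      · exfalso; rw [h] at hEq; omega
      · exfalso
        have h7 : (o j).1 < (o i).1 := Subtype.coe_lt_coe.mpr (o.strictMono h)
        rw [Fin.lt_def] at h7
        omega
    have hgap : i.1 + 1 < j.1 := hI i hi j hj hij
    set l : Fin (2*d+2) := ⟨i.1+1, by omega⟩ with hl
    have h1 : (o i).1 < (o l).1 :=
      Subtype.coe_lt_coe.mpr (o.strictMono (by rw [Fin.lt_def]; simp [hl]))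
    have h2 : (o l).1 < (o j).1 :=
      Subtype.coe_lt_coe.mpr (o.strictMono (by rw [Fin.lt_def]; simp [hl]; omega))
    rw [Fin.lt_def] at h1 h2
    omega
  refine ⟨η, hsupp, hsum, ?_, ?_, ?_, ?_, ?_⟩
  · rw [hPimg, Finset.card_image_of_injective _ hoinj, hcardE]
  · rw [hNimg, Finset.card_image_of_injective _ hoinj, hcardO]
  · rw [hPimg]
    apply hsepKey
    intro i hi j hj hij
    obtain ⟨a, ha⟩ := (Finset.mem_filter.mp hi).2
    obtain ⟨b, hb⟩ := (Finset.mem_filter.mp hj).2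
    rw [Fin.lt_def] at hij
    omega
  · rw [hNimg]
    apply hsepKey
    intro i hi j hj hij
    have ha := (Finset.mem_filter.mp hi).2
    have hb := (Finset.mem_filter.mp hj).2
    rw [Nat.not_even_iff_odd] at ha hb
    obtain ⟨a, ha⟩ := ha
    obtain ⟨b, hb⟩ := hb
    rw [Fin.lt_def] at hij
    omega
  · ext v
    simp only [Finset.mem_union, Finset.mem_filter, Finset.mem_univ, true_and]
    constructor
    · rintro (h | h)
      · by_contra hv
        rw [hsupp v hv] at h
        exact lt_irrefl 0 h
      · by_contra hv
        rw [hsupp v hv] at h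
        exact lt_irrefl 0 h
    · intro hv
      rw [hηv v hv]
      rcases lt_trichotomy (g' (o.symm ⟨v, hv⟩)) 0 with h | h | h
      · exact Or.inr h
      · exact absurd h (hfull' _)
      · exact Or.inl h

lemma cycVert_injective (hd : 0 < d) : Function.Injective (cycVert d m) := by
  intro i j h
  have h0 := congrFun (congrArg WithLp.ofLp h) ⟨0, by omega⟩
  have h1 : ((i.1 : ℝ) + 1) ^ (0+1) = ((j.1 : ℝ) + 1) ^ (0+1) := h0
  norm_num at h1
  exact Fin.ext (by exact_mod_cast h1)

lemma cycHull_mono {A B : Finset (Fin m)} (h : A ⊆ B) : cycHull d m A ⊆ cycHull d m B :=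
  convexHull_mono (Set.image_mono (by exact_mod_cast h))

lemma cycHull_subset_poly (B : Finset (Fin m)) : cycHull d m B ⊆ cycPoly d m :=
  convexHull_mono (by rintro x ⟨v, -, rfl⟩; exact ⟨v, rfl⟩)

lemma mem_cycHull_iff (hd : 0 < d) (B : Finset (Fin m)) (x : EuclideanSpace ℝ (Fin (2*d))) :
    x ∈ cycHull d m B ↔ ∃ w : Fin m → ℝ, (∀ v, 0 ≤ w v) ∧ (∀ v, v ∉ B → w v = 0) ∧
      ∑ v ∈ B, w v = 1 ∧ ∑ v ∈ B, w v • cycVert d m v = x := by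
  classical
  constructor
  · intro hx
    rw [cycHull, ← Finset.coe_image, Finset.convexHull_eq] at hx
    obtain ⟨w', h0, h1, h2⟩ := hx
    refine ⟨fun v => if v ∈ B then w' (cycVert d m v) else 0, ?_, ?_, ?_, ?_⟩
    · intro v
      dsimp only
      by_cases hv : v ∈ B
      · rw [if_pos hv]
        exact h0 _ (Finset.mem_image_of_mem _ hv)
      · rw [if_neg hv]
    · intro v hv; dsimp only; rw [if_neg hv]
    · have hsum1 : (∑ v ∈ B, if v ∈ B then w' (cycVert d m v) else 0)
          = ∑ y ∈ B.image (cycVert d m), w' y := by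
        rw [Finset.sum_image (fun a _ b _ hab => cycVert_injective hd hab)]
        exact Finset.sum_congr rfl (fun v hv => if_pos hv)
      rw [hsum1]; exact h1
    · have hsum2 : (∑ v ∈ B, (if v ∈ B then w' (cycVert d m v) else 0) • cycVert d m v)
          = ∑ y ∈ B.image (cycVert d m), w' y • id y := by
        rw [Finset.sum_image (fun a _ b _ hab => cycVert_injective hd hab)]
        exact Finset.sum_congr rfl (fun v hv => by rw [if_pos hv]; rfl)
      rw [hsum2, ← Finset.centerMass_eq_of_sum_1 _ id h1]
      exact h2
  · rintro ⟨w, hw0, hwsupp, hw1, hwx⟩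
    have h3 : B.centerMass w (cycVert d m) ∈ convexHull ℝ (cycVert d m '' (B : Set (Fin m))) :=
      Finset.centerMass_mem_convexHull B (fun v _ => hw0 v) (by rw [hw1]; norm_num)
        (fun v hv => Set.mem_image_of_mem _ hv)
    rw [Finset.centerMass_eq_of_sum_1 _ _ hw1, hwx] at h3
    exact h3

lemma sum_attach_filter {M : Type*} [AddCommMonoid M] (B Y : Finset (Fin m)) (hYB : Y ⊆ B)
    (f : Fin m → M) :
    ∑ v ∈ B.attach.filter (fun v => v.1 ∈ Y), f v.1 = ∑ v ∈ Y, f v := by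
  classical
  rw [Finset.sum_filter, Finset.sum_attach B (fun u => if u ∈ Y then f u else 0),
    Finset.sum_ite_mem, Finset.inter_eq_right.mpr hYB]

lemma support_subset (hd : 0 < d) (B₂ : Finset (Fin m))
    (hind : AffineIndependent ℝ (fun v : B₂ => cycVert d m v))
    (X C : Finset (Fin m)) (hXB : X ⊆ B₂) (hCB : C ⊆ B₂)
    (w : Fin m → ℝ) (hwpos : ∀ v ∈ X, 0 < w v) (hw1 : ∑ v ∈ X, w v = 1)
    (z : EuclideanSpace ℝ (Fin (2*d))) (hz : ∑ v ∈ X, w v • cycVert d m v = z)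
    (hzC : z ∈ cycHull d m C) : X ⊆ C := by
  classical
  obtain ⟨u, hu0, husupp, hu1, hux⟩ := (mem_cycHull_iff hd C z).mp hzC
  set p : {v // v ∈ B₂} → EuclideanSpace ℝ (Fin (2*d)) := fun v => cycVert d m v.1 with hp
  set s1 := B₂.attach.filter (fun v => v.1 ∈ X) with hs1
  set s2 := B₂.attach.filter (fun v => v.1 ∈ C) with hs2
  have hw1' : ∑ v ∈ s1, w v.1 = 1 := by rw [hs1, sum_attach_filter B₂ X hXB]; exact hw1
  have hu1' : ∑ v ∈ s2, u v.1 = 1 := by rw [hs2, sum_attach_filter B₂ C hCB]; exact hu1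
  have haff1 : s1.affineCombination ℝ p (fun v => w v.1) = z := by
    rw [Finset.affineCombination_eq_linear_combination _ _ _ hw1']
    rw [hs1, sum_attach_filter B₂ X hXB (fun v => w v • cycVert d m v)]
    exact hz
  have haff2 : s2.affineCombination ℝ p (fun v => u v.1) = z := by
    rw [Finset.affineCombination_eq_linear_combination _ _ _ hu1']
    rw [hs2, sum_attach_filter B₂ C hCB (fun v => u v • cycVert d m v)]
    exact hux
  have hkey := (affineIndependent_iff_indicator_eq_of_affineCombination_eq ℝ p).mp hind
    s1 s2 _ _ hw1' hu1' (haff1.trans haff2.symm)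
  intro v hvX
  have hvB : v ∈ B₂ := hXB hvX
  have h5 := congrFun hkey ⟨v, hvB⟩
  have hmem1 : (⟨v, hvB⟩ : {v // v ∈ B₂}) ∈ s1 := by
    rw [hs1, Finset.mem_filter]
    exact ⟨Finset.mem_attach _ _, hvX⟩
  rw [Set.indicator_apply, Set.indicator_apply] at h5
  rw [if_pos (Finset.mem_coe.mpr hmem1)] at h5
  by_cases hmem2 : (⟨v, hvB⟩ : {v // v ∈ B₂}) ∈ s2
  · exact (Finset.mem_filter.mp hmem2).2
  · rw [if_neg (fun hc => hmem2 (Finset.mem_coe.mp hc))] at h5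
    exact absurd h5 (ne_of_gt (hwpos v hvX))

set_option maxHeartbeats 1000000 in
lemma main_lemma (hd : 0 < d) (S : Finset (Finset (Fin m))) (hS : IsTriang d m S)
    (F : Finset (Fin m)) (hF : F.Nonempty)
    (hsep : ∀ G ⊆ F, G.card = d+1 → SepFinset m G → ∃ B ∈ S, G ⊆ B) :
    ∃ B ∈ S, F ⊆ B := by
  classical
  obtain ⟨hScard, hSind, hScov, hSint⟩ := hS
  set α : Fin m → ℝ := fun v => if v ∈ F then (F.card : ℝ)⁻¹ else 0 with hα
  have hFcard : 0 < (F.card : ℝ) := by exact_mod_cast Finset.card_pos.mpr hF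
  have hα0 : ∀ v, 0 ≤ α v := by
    intro v; rw [hα]; dsimp only
    split
    · positivity
    · exact le_refl 0
  have hαsupp : ∀ v, v ∉ F → α v = 0 := fun v hv => by rw [hα]; exact if_neg hv
  have hαF : ∀ v ∈ F, α v = (F.card : ℝ)⁻¹ := fun v hv => by rw [hα]; exact if_pos hv
  have hα1 : ∑ v ∈ F, α v = 1 := by
    rw [Finset.sum_congr rfl hαF, Finset.sum_const, nsmul_eq_mul]
    field_simp
  set x : EuclideanSpace ℝ (Fin (2*d)) := ∑ v ∈ F, α v • cycVert d m v with hx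
  have hxmem : x ∈ cycHull d m F := (mem_cycHull_iff hd F x).mpr ⟨α, hα0, hαsupp, hα1, rfl⟩
  have hxpoly : x ∈ cycPoly d m := cycHull_subset_poly F hxmem
  rw [← hScov] at hxpoly
  obtain ⟨B, hBS, hxB⟩ := Set.mem_iUnion₂.mp hxpoly
  by_cases hFB : F ⊆ B
  · exact ⟨B, hBS, hFB⟩
  exfalso
  obtain ⟨β, hβ0, hβsupp, hβ1, hβx⟩ := (mem_cycHull_iff hd B x).mp hxB
  -- extend sums to univ
  have hαu1 : ∑ v, α v = 1 := by
    rw [← Finset.sum_subset (Finset.subset_univ F) (fun v _ hv => hαsupp v hv)]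
    exact hα1
  have hβu1 : ∑ v, β v = 1 := by
    rw [← Finset.sum_subset (Finset.subset_univ B) (fun v _ hv => hβsupp v hv)]
    exact hβ1
  have hαuvec : ∑ v, α v • cycVert d m v = x := by
    rw [← Finset.sum_subset (Finset.subset_univ F)
      (fun v _ hv => by rw [hαsupp v hv, zero_smul])]
  have hβuvec : ∑ v, β v • cycVert d m v = x := by
    rw [← Finset.sum_subset (Finset.subset_univ B)
      (fun v _ hv => by rw [hβsupp v hv, zero_smul])]
    exact hβx
  -- the Dep predicate
  set Dep : (Fin m → ℝ) → Prop := fun γ =>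
    (∀ v, 0 < γ v → v ∈ F) ∧ (∀ v, γ v < 0 → v ∈ B) ∧
    (∀ k, k ≤ 2*d → ∑ v, γ v * lab v ^ k = 0) ∧ γ ≠ 0 with hDep
  -- power sums helper
  have hpowsum : ∀ γ : Fin m → ℝ, (∑ v, γ v = 0) → (∑ v, γ v • cycVert d m v = 0) →
      ∀ k, k ≤ 2*d → ∑ v, γ v * lab v ^ k = 0 := by
    intro γ h0 hvec k hk
    rcases Nat.eq_zero_or_pos k with rfl | hkpos
    · simpa using h0
    · have h2 := congrFun (congrArg WithLp.ofLp hvec) ⟨k-1, by omega⟩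
      rw [sum_coord] at h2
      have h3 : k - 1 + 1 = k := by omega
      rw [h3] at h2
      simpa using h2
  have hdep0 : Dep (fun v => α v - β v) := by
    rw [hDep]
    refine ⟨?_, ?_, ?_, ?_⟩
    · intro v hv
      dsimp only at hv
      by_contra hvF
      rw [hαsupp v hvF] at hv
      have := hβ0 v
      linarith
    · intro v hv
      dsimp only at hv
      by_contra hvB
      rw [hβsupp v hvB] at hv
      have := hα0 v
      linarith
    · apply hpowsum
      · show ∑ v, (α v - β v) = 0
        rw [Finset.sum_sub_distrib, hαu1, hβu1, sub_self]
      · show ∑ v, (α v - β v) • cycVert d m v = 0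
        rw [Finset.sum_congr rfl (fun v (_ : v ∈ Finset.univ) => sub_smul (α v) (β v) (cycVert d m v)),
          Finset.sum_sub_distrib, hαuvec, hβuvec, sub_self]
    · intro hzero
      obtain ⟨v, hvF, hvB⟩ := Finset.not_subset.mp hFB
      have h4 := congrFun hzero v
      rw [hαF v hvF, hβsupp v hvB] at h4
      simp only [sub_zero] at h4
      exact absurd h4 (by positivity)
  set sset : Set ℕ := {n | ∃ γ, Dep γ ∧ (Finset.univ.filter (fun v => γ v ≠ 0)).card = n}
    with hsset
  have hsne : sset.Nonempty := ⟨_, (fun v => α v - β v), hdep0, rfl⟩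
  obtain ⟨γ, hγdep, hγcard⟩ := Nat.sInf_mem hsne
  obtain ⟨hγF, hγB, hγpow, hγne⟩ := hγdep
  set A : Finset (Fin m) := Finset.univ.filter (fun v => γ v ≠ 0) with hA
  have hAmem : ∀ v ∈ A, γ v ≠ 0 := fun v hv => (Finset.mem_filter.mp hv).2
  have hAge : 2*d+2 ≤ A.card := by
    by_contra hlt
    push_neg at hlt
    rw [hA] at hlt
    have h5 : ∀ v, γ v = 0 :=
      zero_of_small lab γ lab_strictMono.injective hγpow (by omega)
    exact hγne (funext h5)
  obtain ⟨D, hDA, hDcard⟩ := Finset.exists_subset_card_eq hAge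
  obtain ⟨η₀, hη₀supp, hη₀sum, hP₀card, hN₀card, hP₀sep, hN₀sep, hPN₀⟩ := dep_alt D hDcard
  have hDne : D.Nonempty := Finset.card_pos.mp (by omega)
  obtain ⟨v₁, hv₁D⟩ := hDne
  have hη₀D : ∀ v ∈ D, η₀ v ≠ 0 := by
    intro v hv
    rw [← hPN₀] at hv
    rcases Finset.mem_union.mp hv with h | h
    · exact ne_of_gt (Finset.mem_filter.mp h).2
    · exact ne_of_lt (Finset.mem_filter.mp h).2
  -- flip sign of η₀ if needed so that γ v₁ * η v₁ > 0
  have hswap : ∃ η : Fin m → ℝ,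
      (∀ v, v ∉ D → η v = 0) ∧
      (∀ k, k ≤ 2*d → ∑ v, η v * lab v ^ k = 0) ∧
      (Finset.univ.filter (fun v => 0 < η v)).card = d+1 ∧
      (Finset.univ.filter (fun v => η v < 0)).card = d+1 ∧
      SepFinset m (Finset.univ.filter (fun v => 0 < η v)) ∧
      SepFinset m (Finset.univ.filter (fun v => η v < 0)) ∧
      ((Finset.univ.filter (fun v => 0 < η v)) ∪ (Finset.univ.filter (fun v => η v < 0)) = D) ∧
      0 < γ v₁ * η v₁ := by
    rcases lt_trichotomy (γ v₁ * η₀ v₁) 0 with h | h | h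
    · have hsupp1 : ∀ v, v ∉ D → -(η₀ v) = 0 := fun v hv => by rw [hη₀supp v hv, neg_zero]
      have hsum1 : ∀ k, k ≤ 2*d → ∑ v, -(η₀ v) * lab v ^ k = 0 := by
        intro k hk
        have h6 : ∑ v, -(η₀ v) * lab v ^ k = -∑ v, η₀ v * lab v ^ k := by
          rw [← Finset.sum_neg_distrib]
          exact Finset.sum_congr rfl (fun v _ => by ring)
        rw [h6, hη₀sum k hk, neg_zero]
      have hfilt1 : (Finset.univ.filter (fun v => 0 < -(η₀ v))) =
          (Finset.univ.filter (fun v => η₀ v < 0)) := by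
        ext v; simp [neg_pos]
      have hfilt2 : (Finset.univ.filter (fun v => -(η₀ v) < 0)) =
          (Finset.univ.filter (fun v => 0 < η₀ v)) := by
        ext v; simp [neg_lt_zero]
      exact ⟨fun v => -(η₀ v), hsupp1, hsum1,
        by rw [hfilt1]; exact hN₀card, by rw [hfilt2]; exact hP₀card,
        by rw [hfilt1]; exact hN₀sep, by rw [hfilt2]; exact hP₀sep,
        by rw [hfilt1, hfilt2, Finset.union_comm]; exact hPN₀,
        by show (0:ℝ) < γ v₁ * -(η₀ v₁); nlinarith⟩
    · exfalso
      exact (mul_ne_zero (hAmem v₁ (hDA hv₁D)) (hη₀D v₁ hv₁D)) h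
    · exact ⟨η₀, hη₀supp, hη₀sum, hP₀card, hN₀card, hP₀sep, hN₀sep, hPN₀, h⟩
  obtain ⟨η, hηsupp, hηsum, hPcard, hNcard, hPsep, hNsep, hPN, hv₁sign⟩ := hswap
  have hηD : ∀ v ∈ D, η v ≠ 0 := by
    intro v hv
    rw [← hPN] at hv
    rcases Finset.mem_union.mp hv with h | h
    · exact ne_of_gt (Finset.mem_filter.mp h).2
    · exact ne_of_lt (Finset.mem_filter.mp h).2
  -- the minimum ratio
  set R : Finset (Fin m) := D.filter (fun v => 0 < γ v * η v) with hR
  have hv₁R : v₁ ∈ R := Finset.mem_filter.mpr ⟨hv₁D, hv₁sign⟩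
  have hRne : (R.image (fun v => γ v / η v)).Nonempty :=
    ⟨_, Finset.mem_image_of_mem _ hv₁R⟩
  set ts : ℝ := (R.image (fun v => γ v / η v)).min' hRne with hts
  obtain ⟨v₀, hv₀R, hv₀⟩ := Finset.mem_image.mp ((R.image (fun v => γ v / η v)).min'_mem hRne)
  have hv₀ts : γ v₀ / η v₀ = ts := by rw [hts]; exact hv₀
  have hts_le : ∀ v ∈ R, ts ≤ γ v / η v := by
    intro v hv
    rw [hts]
    exact Finset.min'_le _ _ (Finset.mem_image_of_mem _ hv)
  have hts_pos : 0 < ts := by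
    rw [← hv₀ts]
    have h9 := (Finset.mem_filter.mp hv₀R).2
    exact div_pos_iff.mpr (mul_pos_iff.mp h9)
  set ζ : Fin m → ℝ := fun v => γ v - ts * η v with hζ
  have hζdef : ∀ v, ζ v = γ v - ts * η v := fun _ => rfl
  have hkey : ∀ v, (0 < ζ v → 0 < γ v) ∧ (ζ v < 0 → γ v < 0) := by
    intro v
    by_cases hvD : v ∈ D
    · have hηv : η v ≠ 0 := hηD v hvD
      have hγv : γ v ≠ 0 := hAmem v (hDA hvD)
      by_cases hvR : 0 < γ v * η v
      · have hle := hts_le v (Finset.mem_filter.mpr ⟨hvD, hvR⟩)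
        rcases lt_trichotomy (η v) 0 with hη | hη | hη
        · have hγ : γ v < 0 := by nlinarith
          constructor
          · intro h
            exfalso
            have h10 : γ v ≤ ts * η v := by
              have := (le_div_iff_of_neg hη).mp hle
              linarith
            rw [hζdef v] at h
            linarith
          · intro _; exact hγ
        · exact absurd hη hηv
        · have hγ : 0 < γ v := by nlinarith
          constructor
          · intro _; exact hγ
          · intro h
            exfalso
            have h10 : ts * η v ≤ γ v := by
              have := (le_div_iff₀ hη).mp hle
              linarith
            rw [hζdef v] at h
            linarith
      · have hprod : γ v * η v < 0 := lt_of_le_of_ne (not_lt.mp hvR) (mul_ne_zero hγv hηv)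
        rcases lt_trichotomy (γ v) 0 with hγ | hγ | hγ
        · have hη : 0 < η v := by nlinarith
          constructor
          · intro h
            exfalso
            rw [hζdef v] at h
            nlinarith
          · intro _; exact hγ
        · exact absurd hγ hγv
        · have hη : η v < 0 := by nlinarith
          constructor
          · intro _; exact hγ
          · intro h
            exfalso
            rw [hζdef v] at h
            nlinarith
    · have hζv : ζ v = γ v := by rw [hζdef v, hηsupp v hvD]; ring
      rw [hζv]
      exact ⟨fun h => h, fun h => h⟩
  have hζv₀ : ζ v₀ = 0 := by
    rw [hζdef v₀]
    have hηv₀ : η v₀ ≠ 0 := hηD v₀ (Finset.mem_of_mem_filter v₀ hv₀R)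
    rw [← hv₀ts, div_mul_cancel₀ _ hηv₀, sub_self]
  by_cases hζ0 : ζ = 0
  · -- terminal case : γ = ts • η
    have hγη : ∀ v, γ v = ts * η v := by
      intro v
      have h14 : ζ v = 0 := by rw [hζ0]; rfl
      rw [hζdef v] at h14
      linarith
    set P : Finset (Fin m) := Finset.univ.filter (fun v => 0 < η v) with hP
    set N : Finset (Fin m) := Finset.univ.filter (fun v => η v < 0) with hN
    have hPF : P ⊆ F := by
      intro v hv
      have h11 : 0 < η v := (Finset.mem_filter.mp hv).2
      exact hγF v (by rw [hγη v]; exact mul_pos hts_pos h11)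
    have hNB : N ⊆ B := by
      intro v hv
      have h11 : η v < 0 := (Finset.mem_filter.mp hv).2
      exact hγB v (by rw [hγη v]; exact mul_neg_of_pos_of_neg hts_pos h11)
    obtain ⟨B₂, hB₂S, hPB₂⟩ := hsep P hPF hPcard hPsep
    have hdisj : Disjoint P N := by
      rw [Finset.disjoint_left]
      intro v hvP hvN
      have h1 := (Finset.mem_filter.mp hvP).2
      have h2 := (Finset.mem_filter.mp hvN).2
      linarith
    have hη0sum : ∑ v, η v = 0 := by
      have := hηsum 0 (by omega)
      simpa using this
    have hηvec : ∑ v, η v • cycVert d m v = 0 := by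
      ext j
      rw [sum_coord]
      have := hηsum (j.1+1) (by omega)
      simpa using this
    have hPNsum : ∑ v ∈ P, η v + ∑ v ∈ N, η v = 0 := by
      rw [← Finset.sum_union hdisj, hPN]
      rw [Finset.sum_subset (Finset.subset_univ D) (fun v _ hv => hηsupp v hv)]
      exact hη0sum
    have hPNvec : ∑ v ∈ P, η v • cycVert d m v + ∑ v ∈ N, η v • cycVert d m v = 0 := by
      rw [← Finset.sum_union hdisj, hPN]
      rw [Finset.sum_subset (Finset.subset_univ D)
        (fun v _ hv => by rw [hηsupp v hv, zero_smul])]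
      exact hηvec
    set σ : ℝ := ∑ v ∈ P, η v with hσ
    have hPne : P.Nonempty := Finset.card_pos.mp (by omega)
    have hσpos : 0 < σ :=
      Finset.sum_pos (fun v hv => (Finset.mem_filter.mp hv).2) hPne
    have hsmulsum : ∀ (c : ℝ) (T : Finset (Fin m)) (f : Fin m → ℝ),
        ∑ v ∈ T, (c * f v) • cycVert d m v = c • ∑ v ∈ T, f v • cycVert d m v := by
      intro c T f
      rw [Finset.smul_sum]
      exact Finset.sum_congr rfl (fun v _ => (smul_smul c (f v) _).symm)
    set z : EuclideanSpace ℝ (Fin (2*d)) := ∑ v ∈ P, (σ⁻¹ * η v) • cycVert d m v with hz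
    have hzsmul : z = σ⁻¹ • ∑ v ∈ P, η v • cycVert d m v := by
      rw [hz]; exact hsmulsum σ⁻¹ P η
    have hPsum1 : ∑ v ∈ P, σ⁻¹ * η v = 1 := by
      rw [← Finset.mul_sum, ← hσ, inv_mul_cancel₀ (ne_of_gt hσpos)]
    have h12 : ∑ v ∈ N, η v = -σ := by linarith [hPNsum]
    have hNsum1 : ∑ v ∈ N, σ⁻¹ * (-(η v)) = 1 := by
      calc ∑ v ∈ N, σ⁻¹ * (-(η v)) = σ⁻¹ * -(∑ v ∈ N, η v) := by
            rw [← Finset.mul_sum, Finset.sum_neg_distrib]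
        _ = 1 := by rw [h12]; field_simp
    have hNvec : ∑ v ∈ N, (σ⁻¹ * (-(η v))) • cycVert d m v = z := by
      calc ∑ v ∈ N, (σ⁻¹ * (-(η v))) • cycVert d m v
          = σ⁻¹ • ∑ v ∈ N, (-(η v)) • cycVert d m v := hsmulsum σ⁻¹ N (fun v => -(η v))
        _ = σ⁻¹ • ∑ v ∈ P, η v • cycVert d m v := by
            congr 1
            rw [Finset.sum_congr rfl (fun v (_ : v ∈ N) => neg_smul (η v) (cycVert d m v)),
              Finset.sum_neg_distrib]
            exact neg_eq_of_add_eq_zero_left hPNvec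
        _ = z := hzsmul.symm
    have hzP : z ∈ cycHull d m P := by
      rw [mem_cycHull_iff hd]
      refine ⟨fun v => if v ∈ P then σ⁻¹ * η v else 0, ?_, ?_, ?_, ?_⟩
      · intro v
        dsimp only
        split
        · next h =>
            exact mul_nonneg (inv_nonneg.mpr hσpos.le) (le_of_lt (Finset.mem_filter.mp h).2)
        · exact le_refl 0
      · intro v hv; dsimp only; rw [if_neg hv]
      · calc (∑ v ∈ P, if v ∈ P then σ⁻¹ * η v else 0) = ∑ v ∈ P, σ⁻¹ * η v :=
              Finset.sum_congr rfl (fun v hv => if_pos hv)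
          _ = 1 := hPsum1
      · calc (∑ v ∈ P, (if v ∈ P then σ⁻¹ * η v else 0) • cycVert d m v)
              = ∑ v ∈ P, (σ⁻¹ * η v) • cycVert d m v :=
              Finset.sum_congr rfl (fun v hv => by rw [if_pos hv])
          _ = z := hz.symm
    have hzN : z ∈ cycHull d m N := by
      rw [mem_cycHull_iff hd]
      refine ⟨fun v => if v ∈ N then σ⁻¹ * (-(η v)) else 0, ?_, ?_, ?_, ?_⟩
      · intro v
        dsimp only
        split
        · next h =>
            exact mul_nonneg (inv_nonneg.mpr hσpos.le)
              (by have := (Finset.mem_filter.mp h).2; linarith)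
        · exact le_refl 0
      · intro v hv; dsimp only; rw [if_neg hv]
      · calc (∑ v ∈ N, if v ∈ N then σ⁻¹ * (-(η v)) else 0) = ∑ v ∈ N, σ⁻¹ * (-(η v)) :=
              Finset.sum_congr rfl (fun v hv => if_pos hv)
          _ = 1 := hNsum1
      · calc (∑ v ∈ N, (if v ∈ N then σ⁻¹ * (-(η v)) else 0) • cycVert d m v)
              = ∑ v ∈ N, (σ⁻¹ * (-(η v))) • cycVert d m v :=
              Finset.sum_congr rfl (fun v hv => by rw [if_pos hv])
          _ = z := hNvec
    have hzB₂ : z ∈ cycHull d m B₂ := cycHull_mono hPB₂ hzP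
    have hzB : z ∈ cycHull d m B := cycHull_mono hNB hzN
    have hzint : z ∈ cycHull d m (B₂ ∩ B) := by
      rw [← hSint B₂ hB₂S B hBS]
      exact ⟨hzB₂, hzB⟩
    have hPsub : P ⊆ B₂ ∩ B :=
      support_subset hd B₂ (hSind B₂ hB₂S) P (B₂ ∩ B) hPB₂ Finset.inter_subset_left
        (fun v => σ⁻¹ * η v)
        (fun v hv => mul_pos (inv_pos.mpr hσpos) (Finset.mem_filter.mp hv).2)
        hPsum1 z hz.symm hzint
    have hNsub : N ⊆ B₂ ∩ B :=
      support_subset hd B (hSind B hBS) N (B₂ ∩ B) hNB Finset.inter_subset_right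
        (fun v => σ⁻¹ * (-(η v)))
        (fun v hv => mul_pos (inv_pos.mpr hσpos)
          (by have := (Finset.mem_filter.mp hv).2; linarith))
        hNsum1 z hNvec hzint
    have hUB₂ : P ∪ N ⊆ B₂ := Finset.union_subset (hPsub.trans Finset.inter_subset_left)
      (hNsub.trans Finset.inter_subset_left)
    have hUcard : (P ∪ N).card = 2*d+2 := by
      rw [Finset.card_union_of_disjoint hdisj, hPcard, hNcard]
      omega
    have hB₂card := hScard B₂ hB₂S
    have hfin := Finset.card_le_card hUB₂
    omega
  · -- ζ is a smaller dependence : contradiction with minimality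
    have hζdep : Dep ζ := by
      rw [hDep]
      refine ⟨fun v hv => hγF v ((hkey v).1 hv), fun v hv => hγB v ((hkey v).2 hv), ?_, hζ0⟩
      intro k hk
      have h1 : ∑ v, ζ v * lab v ^ k
          = ∑ v, (γ v * lab v ^ k - ts * (η v * lab v ^ k)) :=
        Finset.sum_congr rfl (fun v _ => by rw [hζdef v]; ring)
      rw [h1, Finset.sum_sub_distrib, ← Finset.mul_sum, hγpow k hk, hηsum k hk,
        mul_zero, sub_zero]
    have hζsub : (Finset.univ.filter (fun v => ζ v ≠ 0)) ⊆ A.erase v₀ := by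
      intro v hv
      have hvne : ζ v ≠ 0 := (Finset.mem_filter.mp hv).2
      refine Finset.mem_erase.mpr ⟨?_, ?_⟩
      · intro h; rw [h] at hvne; exact hvne hζv₀
      · rw [hA, Finset.mem_filter]
        refine ⟨Finset.mem_univ v, ?_⟩
        intro hγ0
        apply hvne
        rw [hζdef v]
        by_cases hvD : v ∈ D
        · exact absurd hγ0 (hAmem v (hDA hvD))
        · rw [hγ0, hηsupp v hvD]; ring
    have hv₀A : v₀ ∈ A := hDA (Finset.mem_of_mem_filter v₀ hv₀R)
    have hcardlt : (Finset.univ.filter (fun v => ζ v ≠ 0)).card < A.card := by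
      calc (Finset.univ.filter (fun v => ζ v ≠ 0)).card ≤ (A.erase v₀).card :=
            Finset.card_le_card hζsub
        _ < A.card := by
            rw [Finset.card_erase_of_mem hv₀A]
            have := Finset.card_pos.mpr ⟨v₀, hv₀A⟩
            omega
    have hmemsset : (Finset.univ.filter (fun v => ζ v ≠ 0)).card ∈ sset := by
      rw [hsset]; exact ⟨ζ, hζdep, rfl⟩
    have hle := Nat.sInf_le hmemsset
    rw [hγcard] at hcardlt
    omega

end CycAux

/-- A triangulation `S` of `C(m,2d)` is determined by its `d`-faces: the faces of `S` of
dimension at least `d` are exactly the vertex sets all of whose `(d+1)`-element subsets are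
either non-separated or belong to `e(S)`; consequently two triangulations with the same
`e`-set coincide. -/
theorem triangulation_determined_by_d_faces (d m : ℕ) (hd : 0 < d) (hm : 2*d+1 ≤ m)
    (S : Finset (Finset (Fin m))) (hS : IsTriang d m S) :
    (∀ F : Finset (Fin m), d + 1 ≤ F.card →
      ((∃ B ∈ S, F ⊆ B) ↔
        ∀ G ⊆ F, G.card = d + 1 → (¬ SepFinset m G ∨ G ∈ eSetF d m S))) ∧
    (∀ T : Finset (Finset (Fin m)), IsTriang d m T → eSetF d m S = eSetF d m T → S = T) := by
  have key : ∀ (S' T' : Finset (Finset (Fin m))), IsTriang d m S' → IsTriang d m T' →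
      eSetF d m S' = eSetF d m T' → S' ⊆ T' := by
    intro S' T' hS' hT' hE B hBS'
    have hBcard := hS'.1 B hBS'
    obtain ⟨B', hB'T', hBB'⟩ := CycAux.main_lemma hd T' hT' B
      (Finset.card_pos.mp (by omega))
      (fun G hGB hGcard hGsep => by
        have hmem : G ∈ eSetF d m S' := ⟨hGcard, hGsep, B, hBS', hGB⟩
        rw [hE] at hmem
        exact hmem.2.2)
    have hBB : B = B' := Finset.eq_of_subset_of_card_le hBB'
      (by rw [hT'.1 B' hB'T', hBcard])
    rwa [hBB]
  constructor
  · intro F hFcard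
    constructor
    · rintro ⟨B, hBS, hFB⟩ G hGF hGcard
      by_cases hsep : SepFinset m G
      · exact Or.inr ⟨hGcard, hsep, B, hBS, hGF.trans hFB⟩
      · exact Or.inl hsep
    · intro h
      apply CycAux.main_lemma hd S hS F (Finset.card_pos.mp (by omega))
      intro G hGF hGcard hGsep
      rcases h G hGF hGcard with h1 | h1
      · exact absurd hGsep h1
      · exact h1.2.2
  · intro T hT hET
    exact Finset.Subset.antisymm (key S T hS hT hET) (key T S hT hS hET.symm)
end

section
/- The maximal size of a non-intertwining set of separated (d+1)-tuples from {1,...,m} is binomial(m-d-1, d). Furthermore, if X attains this size, then |X/1| = binomial(m-d-2, d) and |X\{1,2}| = binomial(m-d-2, d-1). -/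
open Finset

/-- `X/1`: replace every entry `1` by `2` and discard the tuples that become non-separated. -/
def divOne (d m : ℕ) (X : Set (Fin (d+1) → ℕ)) : Set (Fin (d+1) → ℕ) :=
  {B | SepTuple d m B ∧ ∃ A ∈ X, B = fun x => if A x = 1 then 2 else A x}

/-- `X∖{1,2}`: the `d`-tuples `A` such that `1⋆A ∈ X` and either `2⋆A ∈ X` or `3` is an
entry of `A`. -/
def minus12 (d : ℕ) (X : Set (Fin (d+1) → ℕ)) : Set (Fin d → ℕ) :=
  {A | Fin.cons 1 A ∈ X ∧ (Fin.cons 2 A ∈ X ∨ ∃ x, A x = 3)}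

private lemma sep_gap {d m : ℕ} {A : Fin (d+1) → ℕ} (h : SepTuple d m A) :
    ∀ (k : ℕ) (i j : Fin (d+1)), i.1 + k = j.1 → A i + 2*k ≤ A j := by
  intro k
  induction k with
  | zero => intro i j hij; have : i = j := Fin.ext (by omega); subst this; omega
  | succ n ih =>
    intro i j hij
    have hlt : i.1 + n < d+1 := by omega
    have h1 := ih i ⟨i.1+n, hlt⟩ rfl
    have h2 := h.2 ⟨i.1+n, hlt⟩ j (show i.1+n+1 = j.1 by omega)
    omega

private lemma sep_lb {d m : ℕ} {A : Fin (d+1) → ℕ} (h : SepTuple d m A) (x : Fin (d+1)) :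
    1 + 2*x.1 ≤ A x := by
  have h0 := (h.1 ⟨0, Nat.succ_pos d⟩).1
  have h1 := sep_gap h x.1 ⟨0, Nat.succ_pos d⟩ x (show 0 + x.1 = x.1 by omega)
  omega

private lemma finite_bounded (n m : ℕ) : {A : Fin n → ℕ | ∀ x, A x ≤ m}.Finite := by
  apply (Set.Finite.pi (t := fun _ : Fin n => Set.Iic m) fun _ => Set.finite_Iic m).subset
  intro A hA
  exact Set.mem_univ_pi.mpr fun i => hA i

private lemma injOn_shift {n k : ℕ} {S : Set (Fin n → ℕ)} (h : ∀ A ∈ S, ∀ x, k ≤ A x) :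
    Set.InjOn (fun (A : Fin n → ℕ) (x : Fin n) => A x - k) S := by
  intro A hA B hB hAB
  funext x
  have h1 : A x - k = B x - k := congrFun hAB x
  have := h A hA x; have := h B hB x
  omega

private lemma nonintw_shift {n k : ℕ} {S : Set (Fin n → ℕ)} (h : ∀ A ∈ S, ∀ x, k ≤ A x)
    (hS : NonIntw S) : NonIntw ((fun (A : Fin n → ℕ) (x : Fin n) => A x - k) '' S) := by
  rintro _ ⟨A, hA, rfl⟩ _ ⟨B, hB, rfl⟩ hI
  refine hS A hA B hB ⟨fun i => ?_, fun i j hij => ?_⟩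
  · have h1 : A i - k < B i - k := hI.1 i
    have := h A hA i; have := h B hB i; omega
  · have h1 : B i - k < A j - k := hI.2 i j hij
    have := h B hB i; have := h A hA j; omega

private lemma sep_shift {d m k : ℕ} {A : Fin (d+1) → ℕ} (h : SepTuple d m A)
    (hlb : ∀ x, k+1 ≤ A x) : SepTuple d (m-k) (fun x => A x - k) := by
  refine ⟨fun x => ?_, fun i j hij => ?_⟩
  · show 1 ≤ A x - k ∧ A x - k ≤ m - k
    have := (h.1 x).2; have := hlb x; omega
  · show A i - k + 2 ≤ A j - k
    have := h.2 i j hij; have := hlb i; omega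

private lemma divOne_lb (e m : ℕ) (X : Set (Fin (e+2) → ℕ))
    (hsep : ∀ A ∈ X, SepTuple (e+1) m A) :
    ∀ B ∈ divOne (e+1) m X, ∀ x, 2 ≤ B x := by
  rintro B ⟨hBsep, A, hA, rfl⟩ x
  have := (hsep A hA).1 x
  show 2 ≤ if A x = 1 then 2 else A x
  by_cases h : A x = 1
  · rw [if_pos h]
  · rw [if_neg h]; omega

private lemma divOne_nonintw (e m : ℕ) (X : Set (Fin (e+2) → ℕ))
    (hsep : ∀ A ∈ X, SepTuple (e+1) m A) (hni : NonIntw X) :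
    NonIntw (divOne (e+1) m X) := by
  have key : ∀ (C : Fin (e+2) → ℕ) (x : Fin (e+2)),
      ((if C x = 1 then 2 else C x) = 2 ∧ C x = 1) ∨
      ((if C x = 1 then 2 else C x) = C x ∧ C x ≠ 1) := by
    intro C x
    by_cases h : C x = 1
    · exact Or.inl ⟨if_pos h, h⟩
    · exact Or.inr ⟨if_neg h, h⟩
  rintro B ⟨hBsep, A, hA, rfl⟩ B' ⟨hB'sep, A', hA', rfl⟩ hI
  refine hni A hA A' hA' ⟨fun i => ?_, fun i j hij => ?_⟩
  · have h1 : (if A i = 1 then 2 else A i) < (if A' i = 1 then 2 else A' i) := hI.1 i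
    have k1 := key A i; have k2 := key A' i
    have := (hsep A hA).1 i; have := (hsep A' hA').1 i
    rcases k1 with ⟨a,b⟩|⟨a,b⟩ <;> rcases k2 with ⟨c,d2⟩|⟨c,d2⟩ <;> omega
  · have h1 : (if A' i = 1 then 2 else A' i) < (if A j = 1 then 2 else A j) := hI.2 i j hij
    have k1 := key A' i; have k2 := key A j
    have hlbj := sep_lb (hsep A hA) j
    rcases k1 with ⟨a,b⟩|⟨a,b⟩ <;> rcases k2 with ⟨c,d2⟩|⟨c,d2⟩ <;> omega

private lemma minus12_mem (e m : ℕ) (X : Set (Fin (e+2) → ℕ))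
    (hsep : ∀ A ∈ X, SepTuple (e+1) m A) :
    ∀ T ∈ minus12 (e+1) X, SepTuple e m T ∧ ∀ x : Fin (e+1), 3 + 2*x.1 ≤ T x := by
  intro T hT
  have hc : SepTuple (e+1) m (Fin.cons 1 T) := hsep _ hT.1
  have hlb : ∀ x : Fin (e+1), 3 + 2*x.1 ≤ T x := by
    intro x
    have h1 := sep_lb hc x.succ
    have h2 : (Fin.cons 1 T : Fin (e+2) → ℕ) x.succ = T x := by rw [Fin.cons_succ]
    have h3 : (x.succ : Fin (e+2)).1 = x.1 + 1 := rfl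
    omega
  refine ⟨⟨fun x => ?_, fun i j hij => ?_⟩, hlb⟩
  · have h1 := hc.1 x.succ
    have h2 : (Fin.cons 1 T : Fin (e+2) → ℕ) x.succ = T x := by rw [Fin.cons_succ]
    omega
  · have h1 := hc.2 i.succ j.succ (by simp only [Fin.val_succ]; omega)
    have h2 : (Fin.cons 1 T : Fin (e+2) → ℕ) i.succ = T i := by rw [Fin.cons_succ]
    have h3 : (Fin.cons 1 T : Fin (e+2) → ℕ) j.succ = T j := by rw [Fin.cons_succ]
    omega

private lemma minus12_nonintw (e m : ℕ) (X : Set (Fin (e+2) → ℕ))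
    (hsep : ∀ A ∈ X, SepTuple (e+1) m A) (hni : NonIntw X) :
    NonIntw (minus12 (e+1) X) := by
  intro T hT T' hT' hI
  have hlbT := (minus12_mem e m X hsep T hT).2
  have hlbT' := (minus12_mem e m X hsep T' hT').2
  rcases hT'.2 with h2 | ⟨x, hx3⟩
  · refine hni _ hT.1 _ h2 ⟨fun i => ?_, fun i j hij => ?_⟩
    · rcases Fin.eq_zero_or_eq_succ i with rfl | ⟨y, rfl⟩
      · rw [Fin.cons_zero, Fin.cons_zero]; omega
      · rw [Fin.cons_succ, Fin.cons_succ]; exact hI.1 y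
    · rcases Fin.eq_zero_or_eq_succ j with rfl | ⟨z, rfl⟩
      · exact absurd hij (by rw [Fin.val_zero]; omega)
      · rw [Fin.cons_succ]
        rcases Fin.eq_zero_or_eq_succ i with rfl | ⟨y, rfl⟩
        · rw [Fin.cons_zero]
          have := hlbT z; omega
        · rw [Fin.cons_succ]
          refine hI.2 y z ?_
          have h4 : (y.succ : Fin (e+2)).1 = y.1+1 := rfl
          have h5 : (z.succ : Fin (e+2)).1 = z.1+1 := rfl
          omega
  · have h1 := hlbT' x
    have h2 := hI.1 x
    have h3 := hlbT x
    omega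

private lemma card_le_div_add_minus (e m : ℕ) (X : Set (Fin (e+2) → ℕ))
    (hsep : ∀ A ∈ X, SepTuple (e+1) m A) :
    X.ncard ≤ (divOne (e+1) m X).ncard + (minus12 (e+1) X).ncard := by
  classical
  set P : (Fin (e+2) → ℕ) → Prop := fun A =>
    A 0 = 1 ∧ ((∃ x, Fin.tail A x = 3) ∨ Fin.cons 2 (Fin.tail A) ∈ X) with hP
  have hfinD : (divOne (e+1) m X).Finite :=
    (finite_bounded (e+2) m).subset (fun B hB x => (hB.1.1 x).2)
  have hfinM : (minus12 (e+1) X).Finite := by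
    apply (finite_bounded (e+1) m).subset
    intro T hT x
    have h1 := (hsep _ hT.1).1 x.succ
    have h2 : (Fin.cons 1 T : Fin (e+2) → ℕ) x.succ = T x := by rw [Fin.cons_succ]
    show T x ≤ m
    omega
  have hXeq : X = (X ∩ {A | ¬ P A}) ∪ (X ∩ {A | P A}) := by
    ext A; constructor
    · intro hA; by_cases h : P A
      · exact Or.inr ⟨hA, h⟩
      · exact Or.inl ⟨hA, h⟩
    · rintro (⟨h,_⟩|⟨h,_⟩) <;> exact h
  have hsucc3 : ∀ A ∈ X, ∀ y : Fin (e+1), 3 ≤ A y.succ := by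
    intro A hA y
    have h1 := sep_lb (hsep A hA) y.succ
    have h2 : (y.succ : Fin (e+2)).1 = y.1 + 1 := rfl
    omega
  have hzero : ∀ A ∈ X, ∀ x : Fin (e+2), A x = 1 → x = 0 := by
    intro A hA x hx
    rcases Fin.eq_zero_or_eq_succ x with rfl | ⟨y, rfl⟩
    · rfl
    · have := hsucc3 A hA y; omega
  have hA_le : (X ∩ {A | ¬ P A}).ncard ≤ (divOne (e+1) m X).ncard := by
    apply Set.ncard_le_ncard_of_injOn (fun A x => if A x = 1 then 2 else A x) ?_ ?_ hfinD
    · rintro A ⟨hA, hnP⟩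
      refine ⟨⟨fun x => ?_, fun i j hij => ?_⟩, A, hA, rfl⟩
      · show 1 ≤ (if A x = 1 then 2 else A x) ∧ (if A x = 1 then 2 else A x) ≤ m
        by_cases hx : A x = 1
        · rw [if_pos hx]
          have h3 := hsucc3 A hA 0
          have h4 := (hsep A hA).1 (Fin.succ 0)
          omega
        · rw [if_neg hx]
          have := (hsep A hA).1 x; omega
      · show (if A i = 1 then 2 else A i) + 2 ≤ (if A j = 1 then 2 else A j)
        have hij2 := (hsep A hA).2 i j hij
        have hlbj := sep_lb (hsep A hA) j
        have hj : A j ≠ 1 := by omega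
        rw [if_neg hj]
        by_cases hi : A i = 1
        · rw [if_pos hi]
          have hi0 : i = 0 := hzero A hA i hi
          have hA0 : A 0 = 1 := by rw [← hi0]; exact hi
          have h5 : ¬ (∃ x, Fin.tail A x = 3) := fun hex => hnP ⟨hA0, Or.inl hex⟩
          have h6 : Fin.tail A 0 ≠ 3 := fun h => h5 ⟨0, h⟩
          have h7 : j = Fin.succ (0 : Fin (e+1)) := by
            apply Fin.ext
            have : (Fin.succ (0 : Fin (e+1)) : Fin (e+2)).1 = 1 := rfl
            have hi0v : (0 : Fin (e+2)).1 = 0 := rfl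
            rw [this]
            rw [hi0] at hij
            omega
          have h8 : Fin.tail A 0 = A (Fin.succ (0 : Fin (e+1))) := rfl
          rw [h7]
          rw [hi0, hA0, h7] at hij2
          omega
        · rw [if_neg hi]; exact hij2
    · rintro A ⟨hA, hnPA⟩ A' ⟨hA', hnPA'⟩ heq
      have hpt : ∀ x, (if A x = 1 then 2 else A x) = (if A' x = 1 then 2 else A' x) :=
        fun x => congrFun heq x
      have hs : ∀ y : Fin (e+1), A y.succ = A' y.succ := by
        intro y
        have h := hpt y.succ
        rw [if_neg (by have := hsucc3 A hA y; omega), if_neg (by have := hsucc3 A' hA' y; omega)] at h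
        exact h
      funext x
      rcases Fin.eq_zero_or_eq_succ x with rfl | ⟨y, rfl⟩
      · by_cases c : A 0 = 1 <;> by_cases c' : A' 0 = 1
        · rw [c, c']
        · exfalso
          have h0 := hpt 0
          rw [if_pos c, if_neg c'] at h0
          have hAeq : A' = Fin.cons 2 (Fin.tail A) := by
            funext z
            rcases Fin.eq_zero_or_eq_succ z with rfl | ⟨y, rfl⟩
            · rw [Fin.cons_zero]; omega
            · rw [Fin.cons_succ]
              exact (hs y).symm
          exact hnPA ⟨c, Or.inr (hAeq ▸ hA')⟩
        · exfalso
          have h0 := hpt 0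
          rw [if_neg c, if_pos c'] at h0
          have hAeq : A = Fin.cons 2 (Fin.tail A') := by
            funext z
            rcases Fin.eq_zero_or_eq_succ z with rfl | ⟨y, rfl⟩
            · rw [Fin.cons_zero]; omega
            · rw [Fin.cons_succ]
              exact hs y
          have htt : Fin.tail A = Fin.tail A' := by
            funext y; exact hs y
          have hmem : Fin.cons 2 (Fin.tail A') ∈ X := by rw [← hAeq]; exact hA
          exact hnPA' ⟨c', Or.inr hmem⟩
        · have h0 := hpt 0
          rw [if_neg c, if_neg c'] at h0
          exact h0
      · exact hs y
  have hB_le : (X ∩ {A | P A}).ncard ≤ (minus12 (e+1) X).ncard := by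
    apply Set.ncard_le_ncard_of_injOn Fin.tail ?_ ?_ hfinM
    · rintro A ⟨hA, hPA⟩
      have hcons : Fin.cons 1 (Fin.tail A) = A := by
        have h := Fin.cons_self_tail (α := fun _ : Fin (e+2) => ℕ) A
        rwa [hPA.1] at h
      refine ⟨by rw [hcons]; exact hA, ?_⟩
      rcases hPA.2 with h | h
      · exact Or.inr h
      · exact Or.inl h
    · rintro A ⟨hA, hPA⟩ A' ⟨hA', hPA'⟩ htail
      have h1 : Fin.cons 1 (Fin.tail A) = A := by
        have h := Fin.cons_self_tail (α := fun _ : Fin (e+2) => ℕ) A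
        rwa [hPA.1] at h
      have h2 : Fin.cons 1 (Fin.tail A') = A' := by
        have h := Fin.cons_self_tail (α := fun _ : Fin (e+2) => ℕ) A'
        rwa [hPA'.1] at h
      rw [← h1, ← h2, htail]
  calc X.ncard = ((X ∩ {A | ¬ P A}) ∪ (X ∩ {A | P A})).ncard := by rw [← hXeq]
    _ ≤ (X ∩ {A | ¬ P A}).ncard + (X ∩ {A | P A}).ncard := Set.ncard_union_le _ _
    _ ≤ _ := Nat.add_le_add hA_le hB_le

private lemma divOne_bound (e m : ℕ) (X : Set (Fin (e+2) → ℕ))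
    (hsep : ∀ A ∈ X, SepTuple (e+1) m A) (hni : NonIntw X)
    (hUB : ∀ X' : Set (Fin (e+2) → ℕ), (∀ A ∈ X', SepTuple (e+1) (m-1) A) → NonIntw X' →
      X'.ncard ≤ ((m-1) - (e+1) - 1).choose (e+1)) :
    (divOne (e+1) m X).ncard ≤ ((m-1) - (e+1) - 1).choose (e+1) := by
  have hlb := divOne_lb e m X hsep
  have hlb1 : ∀ B ∈ divOne (e+1) m X, ∀ x, 1 ≤ B x := fun B hB x => by
    have := hlb B hB x; omega
  rw [← Set.ncard_image_of_injOn (injOn_shift hlb1)]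
  apply hUB
  · rintro C ⟨B, hB, rfl⟩
    exact sep_shift hB.1 (fun x => hlb B hB x)
  · exact nonintw_shift hlb1 (divOne_nonintw e m X hsep hni)

private lemma minus12_bound (e m : ℕ) (X : Set (Fin (e+2) → ℕ))
    (hsep : ∀ A ∈ X, SepTuple (e+1) m A) (hni : NonIntw X)
    (hUB : ∀ X' : Set (Fin (e+1) → ℕ), (∀ A ∈ X', SepTuple e (m-2) A) → NonIntw X' →
      X'.ncard ≤ ((m-2) - e - 1).choose e) :
    (minus12 (e+1) X).ncard ≤ ((m-2) - e - 1).choose e := by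
  have hlb : ∀ T ∈ minus12 (e+1) X, ∀ x, 2 ≤ T x := fun T hT x => by
    have := (minus12_mem e m X hsep T hT).2 x; omega
  rw [← Set.ncard_image_of_injOn (injOn_shift hlb)]
  apply hUB
  · rintro C ⟨T, hT, rfl⟩
    exact sep_shift (minus12_mem e m X hsep T hT).1
      (fun x => by have := (minus12_mem e m X hsep T hT).2 x; omega)
  · exact nonintw_shift hlb (minus12_nonintw e m X hsep hni)

private lemma UB : ∀ (m d : ℕ) (X : Set (Fin (d+1) → ℕ)),
    (∀ A ∈ X, SepTuple d m A) → NonIntw X → X.ncard ≤ (m - d - 1).choose d := by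
  intro m
  induction m using Nat.strong_induction_on with
  | _ m IH =>
  intro d
  cases d with
  | zero =>
    intro X hsep hni
    rw [Nat.choose_zero_right]
    have hone : ∀ i : Fin (0+1), i = 0 := by
      intro i
      apply Fin.ext
      have h1 := i.isLt
      have h2 : (0 : Fin (0+1)).1 = 0 := rfl
      omega
    have hfin : X.Finite := (finite_bounded 1 m).subset (fun A hA x => ((hsep A hA).1 x).2)
    refine (Set.ncard_le_one hfin).mpr ?_
    intro A hA B hB
    rcases lt_trichotomy (A 0) (B 0) with h | h | h
    · exact absurd (⟨fun i => by rw [hone i]; exact h,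
        fun i j hij => by have := j.isLt; omega⟩ : Intw A B) (hni A hA B hB)
    · funext x; rw [hone x]; exact h
    · exact absurd (⟨fun i => by rw [hone i]; exact h,
        fun i j hij => by have := j.isLt; omega⟩ : Intw B A) (hni B hB A hA)
  | succ e =>
    intro X hsep hni
    by_cases hm : m < 2*(e+1)+1
    · have hX : X = ∅ := by
        ext A
        simp only [Set.mem_empty_iff_false, iff_false]
        intro hA
        have h1 := sep_lb (hsep A hA) ⟨e+1, by omega⟩
        have h2 := ((hsep A hA).1 ⟨e+1, by omega⟩).2
        have h3 : (⟨e+1, by omega⟩ : Fin (e+2)).1 = e+1 := rfl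
        omega
      rw [hX, Set.ncard_empty]
      exact Nat.zero_le _
    · push_neg at hm
      have h1 := card_le_div_add_minus e m X hsep
      have h2 := divOne_bound e m X hsep hni (fun X' hs hn => IH (m-1) (by omega) (e+1) X' hs hn)
      have h3 := minus12_bound e m X hsep hni (fun X' hs hn => IH (m-2) (by omega) e X' hs hn)
      have e1 : (m-1) - (e+1) - 1 = m - (e+1) - 2 := by omega
      have e2 : (m-2) - e - 1 = m - (e+1) - 2 := by omega
      have e3 : m - (e+1) - 1 = (m - (e+1) - 2) + 1 := by omega
      rw [e1] at h2
      rw [e2] at h3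
      rw [e3, Nat.choose_succ_succ]
      simp only [Nat.succ_eq_add_one]
      omega

private lemma card_sep_zero (m : ℕ) : {A : Fin 1 → ℕ | SepTuple 0 m A}.ncard = m := by
  have hone : ∀ i : Fin 1, i = 0 := by
    intro i
    apply Fin.ext
    have h1 := i.isLt
    have h2 : (0 : Fin 1).1 = 0 := rfl
    omega
  have hinj : Set.InjOn (fun (A : Fin 1 → ℕ) => A 0) {A | SepTuple 0 m A} := by
    intro A _ B _ h
    funext x
    rw [hone x]
    exact h
  have himg : (fun (A : Fin 1 → ℕ) => A 0) '' {A | SepTuple 0 m A} = Set.Icc 1 m := by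
    ext a
    constructor
    · rintro ⟨A, hA, rfl⟩
      exact Set.mem_Icc.mpr (hA.1 0)
    · intro ha
      exact ⟨fun _ => a, ⟨fun x => Set.mem_Icc.mp ha,
        fun i j hij => by have := j.isLt; omega⟩, rfl⟩
  have := Set.ncard_image_of_injOn hinj
  rw [himg] at this
  rw [← this, Set.ncard_eq_toFinset_card', Set.toFinset_Icc, Nat.card_Icc]
  omega

private lemma card_shift_one (k m : ℕ) :
    {A : Fin (k+1) → ℕ | SepTuple k m A ∧ 2 ≤ A 0}.ncard
      = {A : Fin (k+1) → ℕ | SepTuple k (m-1) A}.ncard := by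
  have hlb : ∀ A ∈ {A : Fin (k+1) → ℕ | SepTuple k m A ∧ 2 ≤ A 0}, ∀ x : Fin (k+1), 2 ≤ A x := by
    rintro A ⟨hAsep, hA0⟩ x
    have h := sep_lb hAsep x
    by_cases hx : x.1 = 0
    · have hx0 : x = 0 := Fin.ext (by rw [Fin.val_zero]; exact hx)
      rw [hx0]; exact hA0
    · omega
  have hlb1 : ∀ A ∈ {A : Fin (k+1) → ℕ | SepTuple k m A ∧ 2 ≤ A 0}, ∀ x : Fin (k+1), 1 ≤ A x :=
    fun A hA x => by have := hlb A hA x; omega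
  have himg : (fun (A : Fin (k+1) → ℕ) (x : Fin (k+1)) => A x - 1) ''
      {A : Fin (k+1) → ℕ | SepTuple k m A ∧ 2 ≤ A 0}
      = {A : Fin (k+1) → ℕ | SepTuple k (m-1) A} := by
    ext C
    constructor
    · rintro ⟨A, hA, rfl⟩
      exact sep_shift hA.1 (fun x => hlb A hA x)
    · intro hC
      refine ⟨fun x => C x + 1, ⟨⟨fun x => ?_, fun i j hij => ?_⟩, ?_⟩, ?_⟩
      · show 1 ≤ C x + 1 ∧ C x + 1 ≤ m
        have := hC.1 x; omega
      · show C i + 1 + 2 ≤ C j + 1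
        have := hC.2 i j hij; omega
      · show 2 ≤ C 0 + 1
        have := (hC.1 0).1; omega
      · funext x
        show C x + 1 - 1 = C x
        omega
  rw [← himg, Set.ncard_image_of_injOn (injOn_shift hlb1)]

private lemma card_first_one (e m : ℕ) :
    {A : Fin (e+2) → ℕ | SepTuple (e+1) m A ∧ A 0 = 1}.ncard
      = {C : Fin (e+1) → ℕ | SepTuple e (m-2) C}.ncard := by
  have hinj : Set.InjOn (fun (A : Fin (e+2) → ℕ) (y : Fin (e+1)) => A y.succ - 2)
      {A : Fin (e+2) → ℕ | SepTuple (e+1) m A ∧ A 0 = 1} := by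
    rintro A ⟨hAsep, hA0⟩ A' ⟨hA'sep, hA'0⟩ h
    funext x
    rcases Fin.eq_zero_or_eq_succ x with rfl | ⟨y, rfl⟩
    · rw [hA0, hA'0]
    · have h1 : A y.succ - 2 = A' y.succ - 2 := congrFun h y
      have h2 := sep_lb hAsep y.succ
      have h3 := sep_lb hA'sep y.succ
      have h4 : (y.succ : Fin (e+2)).1 = y.1 + 1 := rfl
      omega
  have himg : (fun (A : Fin (e+2) → ℕ) (y : Fin (e+1)) => A y.succ - 2) ''
      {A : Fin (e+2) → ℕ | SepTuple (e+1) m A ∧ A 0 = 1}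
      = {C : Fin (e+1) → ℕ | SepTuple e (m-2) C} := by
    ext C
    constructor
    · rintro ⟨A, ⟨hAsep, hA0⟩, rfl⟩
      refine ⟨fun x => ?_, fun i j hij => ?_⟩
      · show 1 ≤ A x.succ - 2 ∧ A x.succ - 2 ≤ m - 2
        have h1 := sep_lb hAsep x.succ
        have h2 := (hAsep.1 x.succ).2
        have h4 : (x.succ : Fin (e+2)).1 = x.1 + 1 := rfl
        omega
      · show A i.succ - 2 + 2 ≤ A j.succ - 2
        have h1 := hAsep.2 i.succ j.succ
          (by simp only [Fin.val_succ]; omega)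
        have h2 := sep_lb hAsep i.succ
        have h4 : (i.succ : Fin (e+2)).1 = i.1 + 1 := rfl
        omega
    · intro hC
      have hm3 : 3 ≤ m := by
        have h1 := hC.1 0; omega
      refine ⟨Fin.cons 1 (fun y => C y + 2), ⟨⟨fun x => ?_, fun i j hij => ?_⟩, by rw [Fin.cons_zero]⟩, ?_⟩
      · rcases Fin.eq_zero_or_eq_succ x with rfl | ⟨y, rfl⟩
        · rw [Fin.cons_zero]; omega
        · rw [Fin.cons_succ]
          have := hC.1 y
          show 1 ≤ C y + 2 ∧ C y + 2 ≤ m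
          omega
      · rcases Fin.eq_zero_or_eq_succ j with rfl | ⟨z, rfl⟩
        · exact absurd hij (by rw [Fin.val_zero]; omega)
        · rw [Fin.cons_succ]
          rcases Fin.eq_zero_or_eq_succ i with rfl | ⟨y, rfl⟩
          · rw [Fin.cons_zero]
            have := hC.1 z
            show 1 + 2 ≤ C z + 2
            omega
          · rw [Fin.cons_succ]
            have h1 := hC.2 y z (by
              have h4 : (y.succ : Fin (e+2)).1 = y.1 + 1 := rfl
              have h5 : (z.succ : Fin (e+2)).1 = z.1 + 1 := rfl
              omega)
            show C y + 2 + 2 ≤ C z + 2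
            omega
      · funext y
        simp only [Fin.cons_succ]
        show C y + 2 - 2 = C y
        omega
  rw [← himg, Set.ncard_image_of_injOn hinj]

private lemma card_sep : ∀ (m k : ℕ),
    {A : Fin (k+1) → ℕ | SepTuple k m A}.ncard = (m - k).choose (k+1) := by
  intro m
  induction m using Nat.strong_induction_on with
  | _ m IH =>
  intro k
  cases k with
  | zero =>
    rw [card_sep_zero, Nat.sub_zero, Nat.choose_one_right]
  | succ e =>
    rcases Nat.eq_zero_or_pos m with rfl | hm
    · have hE : {A : Fin (e+2) → ℕ | SepTuple (e+1) 0 A} = ∅ := by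
        ext A
        simp only [Set.mem_setOf_eq, Set.mem_empty_iff_false, iff_false]
        intro hA
        have := hA.1 0
        omega
      rw [hE, Set.ncard_empty, Nat.zero_sub, Nat.choose_eq_zero_of_lt (by omega)]
    · have hsplit : {A : Fin (e+2) → ℕ | SepTuple (e+1) m A}
          = {A : Fin (e+2) → ℕ | SepTuple (e+1) m A ∧ A 0 = 1}
            ∪ {A : Fin (e+2) → ℕ | SepTuple (e+1) m A ∧ 2 ≤ A 0} := by
        ext A
        simp only [Set.mem_setOf_eq, Set.mem_union]
        constructor
        · intro h
          by_cases h0 : A 0 = 1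
          · exact Or.inl ⟨h, h0⟩
          · exact Or.inr ⟨h, by have := (h.1 0).1; omega⟩
        · rintro (⟨h,_⟩|⟨h,_⟩) <;> exact h
      have hdisj : Disjoint {A : Fin (e+2) → ℕ | SepTuple (e+1) m A ∧ A 0 = 1}
          {A : Fin (e+2) → ℕ | SepTuple (e+1) m A ∧ 2 ≤ A 0} := by
        rw [Set.disjoint_left]
        rintro A ⟨_, h1⟩ ⟨_, h2⟩
        omega
      have hfin1 : {A : Fin (e+2) → ℕ | SepTuple (e+1) m A ∧ A 0 = 1}.Finite :=
        (finite_bounded (e+2) m).subset (fun A hA x => (hA.1.1 x).2)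
      have hfin2 : {A : Fin (e+2) → ℕ | SepTuple (e+1) m A ∧ 2 ≤ A 0}.Finite :=
        (finite_bounded (e+2) m).subset (fun A hA x => (hA.1.1 x).2)
      rw [hsplit, Set.ncard_union_eq hdisj hfin1 hfin2, card_first_one, card_shift_one,
        IH (m-1) (by omega) (e+1), IH (m-2) (by omega) e]
      rcases le_or_gt m (e+1) with hle | hgt
      · have h1 : m - (e+1) = 0 := by omega
        have h2 : m - 2 - e = 0 := by omega
        have h3 : m - 1 - (e+1) = 0 := by omega
        rw [h1, h2, h3, Nat.choose_eq_zero_of_lt (by omega), Nat.choose_eq_zero_of_lt (by omega)]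
      · have h1 : m - (e+1) = (m - 2 - e) + 1 := by omega
        have h2 : m - 1 - (e+1) = m - 2 - e := by omega
        rw [h1, h2, Nat.choose_succ_succ]
        try simp only [Nat.succ_eq_add_one]
        try omega

private lemma exists_extremal (e m : ℕ) :
    ∃ X : Set (Fin (e+2) → ℕ), (∀ A ∈ X, SepTuple (e+1) m A) ∧ NonIntw X ∧
      X.ncard = (m - (e+1) - 1).choose (e+1) := by
  refine ⟨{A | SepTuple (e+1) m A ∧ A 0 = 1}, fun A hA => hA.1, ?_, ?_⟩
  · rintro A ⟨_, hA0⟩ B ⟨_, hB0⟩ hI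
    have h := hI.1 0
    omega
  · rw [card_first_one, card_sep (m-2) e]
    congr 1
    omega

/-- The maximal size of a non-intertwining set of separated `(d+1)`-tuples from `{1,…,m}`
is `(m-d-1).choose d`; if `X` attains this size then `|X/1| = (m-d-2).choose d` and
`|X∖{1,2}| = (m-d-2).choose (d-1)`. -/
theorem max_nonintertwining_size (d m : ℕ) (hd : 0 < d) (hm : 2*d+1 ≤ m) :
    (∀ X : Set (Fin (d+1) → ℕ), (∀ A ∈ X, SepTuple d m A) → NonIntw X →
      X.ncard ≤ (m - d - 1).choose d) ∧
    (∃ X : Set (Fin (d+1) → ℕ), (∀ A ∈ X, SepTuple d m A) ∧ NonIntw X ∧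
      X.ncard = (m - d - 1).choose d) ∧
    (∀ X : Set (Fin (d+1) → ℕ), (∀ A ∈ X, SepTuple d m A) → NonIntw X →
      X.ncard = (m - d - 1).choose d →
      (divOne d m X).ncard = (m - d - 2).choose d ∧
        (minus12 d X).ncard = (m - d - 2).choose (d-1)) := by
  obtain ⟨e, rfl⟩ : ∃ e, d = e+1 := ⟨d-1, by omega⟩
  refine ⟨fun X hsep hni => UB m (e+1) X hsep hni, exists_extremal e m, ?_⟩
  intro X hsep hni hcard
  have h1 := card_le_div_add_minus e m X hsep
  have h2 := divOne_bound e m X hsep hni (fun X' hs hn => UB (m-1) (e+1) X' hs hn)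
  have h3 := minus12_bound e m X hsep hni (fun X' hs hn => UB (m-2) e X' hs hn)
  have e1 : (m-1) - (e+1) - 1 = m - (e+1) - 2 := by omega
  have e2 : (m-2) - e - 1 = m - (e+1) - 2 := by omega
  have e3 : m - (e+1) - 1 = (m - (e+1) - 2) + 1 := by omega
  have e4 : e + 1 - 1 = e := by omega
  rw [e1] at h2
  rw [e2] at h3
  rw [e3] at hcard
  rw [Nat.choose_succ_succ] at hcard
  simp only [Nat.succ_eq_add_one] at hcard
  rw [e4]
  constructor
  · omega
  · omega
end

section
/- If X and Y are non-intertwining sets of separated (d+1)-tuples from {1,...,m}, each of cardinality binomial(m-d-1, d), such that X/1 = Y/1 and X\{1,2} = Y\{1,2}, then X = Y. -/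
open Finset

namespace SepAux

/-- Generalization of `SepTuple` with arbitrary lower bound `c`. -/
def SepC (c m : ℕ) {n : ℕ} (A : Fin n → ℕ) : Prop :=
  (∀ x, c ≤ A x ∧ A x ≤ m) ∧ ∀ i j : Fin n, i.1 + 1 = j.1 → A i + 2 ≤ A j

/-- Generalization of `divOne`. -/
def divC (c m : ℕ) {n : ℕ} (F : Set (Fin n → ℕ)) : Set (Fin n → ℕ) :=
  {B | SepC c m B ∧ ∃ A ∈ F, B = fun x => if A x = c then c + 1 else A x}

/-- Generalization of `minus12`. -/
def minusC (c : ℕ) {n : ℕ} (F : Set (Fin (n+1) → ℕ)) : Set (Fin n → ℕ) :=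
  {T | Fin.cons c T ∈ F ∧ (Fin.cons (c+1) T ∈ F ∨ ∃ x, T x = c + 2)}

lemma sepTuple_iff {d m : ℕ} {A : Fin (d+1) → ℕ} : SepTuple d m A ↔ SepC 1 m A := Iff.rfl

lemma divOne_eq (d m : ℕ) (X : Set (Fin (d+1) → ℕ)) : divOne d m X = divC 1 m X := rfl

lemma minus12_eq (d m : ℕ) (X : Set (Fin (d+1) → ℕ)) : minus12 d X = minusC 1 X := rfl

/-! ### basic separated-tuple facts -/

lemma sep_step {N : ℕ} {A : Fin N → ℕ}
    (h2 : ∀ i j : Fin N, i.1 + 1 = j.1 → A i + 2 ≤ A j) :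
    ∀ (k : ℕ) (i j : Fin N), j.1 = i.1 + k → A i + 2 * k ≤ A j := by
  intro k
  induction k with
  | zero =>
    intro i j hj
    have : i = j := Fin.ext (by omega)
    subst this; omega
  | succ k IH =>
    intro i j hj
    have hlt : i.1 + k < N := by have := j.2; omega
    have h1 := IH i ⟨i.1 + k, hlt⟩ rfl
    have h2' := h2 ⟨i.1 + k, hlt⟩ j (by show i.1 + k + 1 = j.1; omega)
    omega

lemma sep_ge_succ {c m N : ℕ} {A : Fin (N+1) → ℕ} (hA : SepC c m A) (x : Fin (N+1))
    (hx : x ≠ 0) : A 0 + 2 ≤ A x := by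
  have hx' : x.1 ≠ 0 := by
    intro h; exact hx (Fin.ext (by simpa using h))
  have := sep_step hA.2 x.1 0 x (by simp)
  omega

lemma sep_le_all {c m N : ℕ} {A : Fin (N+1) → ℕ} (hA : SepC c m A) (x : Fin (N+1)) :
    A 0 ≤ A x := by
  by_cases hx : x = 0
  · subst hx; exact le_refl _
  · have := sep_ge_succ hA x hx; omega

/-! ### cons lemmas -/

lemma pair_cons_iff {n : ℕ} (R : ℕ → ℕ → Prop) (a b : ℕ) (S T : Fin (n+1) → ℕ) :
    (∀ i j : Fin (n+1+1), i.1 + 1 = j.1 → R ((Fin.cons a S : Fin (n+1+1) → ℕ) i) ((Fin.cons b T : Fin (n+1+1) → ℕ) j)) ↔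
      (R a (T 0) ∧ ∀ i j : Fin (n+1), i.1 + 1 = j.1 → R (S i) (T j)) := by
  constructor
  · intro h
    constructor
    · have := h 0 (Fin.succ 0) (by simp)
      simpa using this
    · intro i j hij
      have := h i.succ j.succ (by simp [Fin.val_succ]; omega)
      simpa using this
  · rintro ⟨h0, hp⟩ i j hij
    rcases Fin.eq_zero_or_eq_succ j with rfl | ⟨j', rfl⟩
    · simp at hij
    · rcases Fin.eq_zero_or_eq_succ i with rfl | ⟨i', rfl⟩
      · have hj' : j' = 0 := by
          have h0' : (0 : Fin (n+1+1)).1 + 1 = j'.succ.1 := hij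
          rw [Fin.val_zero, Fin.val_succ] at h0'
          exact Fin.ext (by have h3 : (j'.succ).1 = j'.1 + 1 := Fin.val_succ j'; have h4 : ((0 : Fin (n+1+1))).1 = 0 := rfl; have h5 : ((0 : Fin (n+1))).1 = 0 := rfl; omega)
        subst hj'
        simpa using h0
      · have hij' : i'.1 + 1 = j'.1 := by
          simp [Fin.val_succ] at hij; omega
        simpa using hp i' j' hij'

lemma sepC_cons_iff {n c m : ℕ} (a : ℕ) (T : Fin (n+1) → ℕ) :
    SepC c m (Fin.cons a T) ↔ (c ≤ a ∧ a ≤ m) ∧ a + 2 ≤ T 0 ∧ SepC c m T := by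
  unfold SepC
  rw [pair_cons_iff (fun x y => x + 2 ≤ y) a a T T]
  constructor
  · rintro ⟨hb, h0, hp⟩
    have hbT : ∀ x, c ≤ T x ∧ T x ≤ m := fun x => by simpa using hb x.succ
    exact ⟨by simpa using hb 0, h0, hbT, hp⟩
  · rintro ⟨ha, h0, hb, hp⟩
    refine ⟨?_, h0, hp⟩
    intro x
    rcases Fin.eq_zero_or_eq_succ x with rfl | ⟨x', rfl⟩
    · simpa using ha
    · simpa using hb x'

lemma intw_cons_iff {n : ℕ} (a b : ℕ) (S T : Fin (n+1) → ℕ) :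
    Intw (Fin.cons a S) (Fin.cons b T) ↔ a < b ∧ b < S 0 ∧ Intw S T := by
  unfold Intw
  rw [pair_cons_iff (fun x y => x < y) b a T S]
  constructor
  · rintro ⟨hlt, h0, hp⟩
    have hlt' : ∀ i, S i < T i := fun i => by simpa using hlt i.succ
    exact ⟨by simpa using hlt 0, h0, hlt', hp⟩
  · rintro ⟨hab, h0, hlt, hp⟩
    refine ⟨?_, h0, hp⟩
    intro x
    rcases Fin.eq_zero_or_eq_succ x with rfl | ⟨x', rfl⟩
    · simpa using hab
    · simpa using hlt x'

/-! ### finiteness -/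

lemma finite_of_bounded {N : ℕ} (F : Set (Fin N → ℕ)) (m : ℕ)
    (h : ∀ A ∈ F, ∀ x, A x ≤ m) : F.Finite := by
  have hsub : F ⊆ Set.pi Set.univ (fun _ : Fin N => Set.Iic m) := by
    intro A hA
    rw [Set.mem_pi]
    intro x _
    exact h A hA x
  exact (Set.Finite.pi (fun _ => Set.finite_Iic m)).subset hsub

/-! ### the image map of `divC` -/

lemma image_cases {c m N : ℕ} {A B : Fin (N+1) → ℕ} (hA : SepC c m A)
    (hB : B = fun x => if A x = c then c + 1 else A x) :
    (∀ x : Fin (N+1), x ≠ 0 → B x = A x) ∧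
      ((B = A ∧ A 0 ≠ c) ∨ (A 0 = c ∧ B 0 = c + 1)) := by
  have hne : ∀ x : Fin (N+1), x ≠ 0 → A x ≠ c := by
    intro x hx
    have h1 := sep_ge_succ hA x hx
    have h2 := (hA.1 0).1
    omega
  constructor
  · intro x hx
    rw [hB]
    exact if_neg (hne x hx)
  · by_cases h0 : A 0 = c
    · right
      refine ⟨h0, ?_⟩
      rw [hB]; simp [h0]
    · left
      refine ⟨?_, h0⟩
      rw [hB]
      funext x
      by_cases hx : x = 0
      · subst hx; exact if_neg h0
      · exact if_neg (hne x hx)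

/-! ### `divC` and `minusC` preserve separation and non-intertwining -/

lemma divC_sep {c m N : ℕ} {F : Set (Fin (N+1) → ℕ)} (hsep : ∀ A ∈ F, SepC c m A) :
    ∀ B ∈ divC c m F, SepC (c+1) m B := by
  rintro B ⟨hBs, A, hA, hB⟩
  obtain ⟨hoff, hcase⟩ := image_cases (hsep A hA) hB
  refine ⟨fun x => ⟨?_, (hBs.1 x).2⟩, hBs.2⟩
  by_cases hx : x = 0
  · subst hx
    rcases hcase with ⟨hBA, h0⟩ | ⟨h0, hB0⟩
    · rw [hBA]
      have := (hsep A hA).1 0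
      omega
    · omega
  · rw [hoff x hx]
    have h1 := sep_ge_succ (hsep A hA) x hx
    have h2 := ((hsep A hA).1 0).1
    omega

lemma divC_nonIntw {c m N : ℕ} {F : Set (Fin (N+1) → ℕ)} (hsep : ∀ A ∈ F, SepC c m A)
    (hni : NonIntw F) : NonIntw (divC c m F) := by
  rintro B ⟨hBs, A, hA, hB⟩ B' ⟨hBs', A', hA', hB'⟩ hI
  obtain ⟨hoff, hcase⟩ := image_cases (hsep A hA) hB
  obtain ⟨hoff', hcase'⟩ := image_cases (hsep A' hA') hB'
  -- `B 0 ≥ c + 1`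
  have hB0 : c + 1 ≤ B 0 := by
    rcases hcase with ⟨hBA, h0⟩ | ⟨h0, hB0⟩
    · rw [hBA]; have := ((hsep A hA).1 0).1; omega
    · omega
  -- B' must come from an unchanged tuple
  have hA'B' : B' = A' := by
    rcases hcase' with ⟨hBA', h0'⟩ | ⟨h0', hB0'⟩
    · exact hBA'
    · exfalso
      have := hI.1 0
      omega
  -- Intw A B'
  refine hni A hA A' hA' ?_
  rw [← hA'B']
  constructor
  · intro i
    by_cases hi : i = 0
    · subst hi
      have h1 := hI.1 0
      rcases hcase with ⟨hBA, h0⟩ | ⟨h0, hB0⟩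
      · rw [hBA] at h1; exact h1
      · omega
    · rw [← hoff i hi]; exact hI.1 i
  · intro i j hij
    have hj : j ≠ 0 := by
      intro h; subst h; simp at hij
    rw [← hoff j hj]
    exact hI.2 i j hij

lemma minusC_sep {c m N : ℕ} {F : Set (Fin (N+1+1) → ℕ)} (hsep : ∀ A ∈ F, SepC c m A) :
    ∀ T ∈ minusC c F, SepC (c+2) m T := by
  rintro T ⟨hT, -⟩
  have hc := hsep _ hT
  constructor
  · intro x
    have h1 := (hc.1 x.succ).2
    have h2 := sep_ge_succ hc x.succ (Fin.succ_ne_zero x)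
    have h3 : (Fin.cons c T : Fin (N+1+1) → ℕ) 0 = c := rfl
    rw [Fin.cons_succ] at h1 h2
    rw [h3] at h2
    exact ⟨by omega, h1⟩
  · intro i j hij
    have := hc.2 i.succ j.succ (by simp [Fin.val_succ]; omega)
    simpa using this

lemma minusC_nonIntw {c m N : ℕ} {F : Set (Fin (N+1+1) → ℕ)} (hsep : ∀ A ∈ F, SepC c m A)
    (hni : NonIntw F) : NonIntw (minusC c F) := by
  intro T hT T' hT' hI
  have hTs := minusC_sep hsep T hT
  have hTs' := minusC_sep hsep T' hT'
  have hT0 : c + 2 ≤ T 0 := (hTs.1 0).1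
  have hT0' : c + 2 ≤ T' 0 := (hTs'.1 0).1
  rcases hT'.2 with hmem | ⟨x, hx⟩
  · exact hni _ hT.1 _ hmem ((intw_cons_iff c (c+1) T T').mpr ⟨by omega, by omega, hI⟩)
  · by_cases hx0 : x = 0
    · subst hx0
      have := hI.1 0
      omega
    · have := sep_ge_succ hTs' x hx0
      omega

/-! ### the counting inequality -/

lemma card_split {c m N : ℕ} (F : Set (Fin (N+1+1) → ℕ)) (hsep : ∀ A ∈ F, SepC c m A) :
    F.ncard ≤ (divC c m F).ncard + (minusC c F).ncard := by
  classical
  have hFfin : F.Finite := finite_of_bounded F m (fun A hA x => ((hsep A hA).1 x).2)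
  have hDfin : (divC c m F).Finite :=
    finite_of_bounded _ m (fun B hB x => ((hB.1.1) x).2)
  have hMfin : (minusC c F).Finite := by
    refine finite_of_bounded _ m (fun T hT x => ?_)
    have := ((hsep _ hT.1).1 x.succ).2
    rwa [Fin.cons_succ] at this
  set F₁ : Set (Fin (N+1+1) → ℕ) :=
    {A | A ∈ F ∧ ¬ (A 0 = c ∧ (A 1 = c + 2 ∨ Fin.cons (c+1) (Fin.tail A) ∈ F))} with hF₁
  have hsub : F₁ ⊆ F := fun A hA => hA.1
  have key1 : F₁.ncard ≤ (divC c m F).ncard := by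
    refine Set.ncard_le_ncard_of_injOn (fun A => fun x => if A x = c then c + 1 else A x)
      ?_ ?_ hDfin
    · rintro A ⟨hAF, hP⟩
      show (fun x => if A x = c then c + 1 else A x) ∈ divC c m F
      obtain ⟨hoff, hcase⟩ := image_cases (hsep A hAF) rfl
      refine ⟨?_, A, hAF, rfl⟩
      rcases hcase with ⟨hBA, h0⟩ | ⟨h0, hB0⟩
      · rw [hBA]; exact hsep A hAF
      · have hP' : ¬ (A 1 = c + 2 ∨ Fin.cons (c+1) (Fin.tail A) ∈ F) := fun hc => hP ⟨h0, hc⟩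
        push_neg at hP'
        obtain ⟨hne, -⟩ := hP'
        have h12 : A 0 + 2 ≤ A 1 := (hsep A hAF).2 0 1 (by simp)
        have hA1 : c + 3 ≤ A 1 := by omega
        refine ⟨fun x => ?_, fun i j hij => ?_⟩
        · beta_reduce
          by_cases hx : x = 0
          · subst hx
            rw [hB0]
            have := (hsep A hAF).1 1
            exact ⟨by omega, by omega⟩
          · rw [hoff x hx]
            exact ⟨((hsep A hAF).1 x).1, ((hsep A hAF).1 x).2⟩
        · beta_reduce
          have hj : j ≠ 0 := by intro h; subst h; simp at hij
          rw [hoff j hj]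
          by_cases hi : i = 0
          · subst hi
            rw [hB0]
            have hj1 : j = 1 := by
              apply Fin.ext
              rw [Fin.val_one]
              simpa using hij.symm
            rw [hj1]
            omega
          · rw [hoff i hi]
            exact (hsep A hAF).2 i j hij
    · intro A hA A' hA' hEq0
      have hEq : (fun x => if A x = c then c + 1 else A x)
          = (fun x => if A' x = c then c + 1 else A' x) := hEq0
      obtain ⟨hoffA, hcA⟩ := image_cases (hsep A hA.1) rfl
      obtain ⟨hoffA', hcA'⟩ := image_cases (hsep A' hA'.1) rfl
      have hoff : ∀ x : Fin (N+1+1), x ≠ 0 → A x = A' x := fun x hx => by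
        have e := congrFun hEq x
        beta_reduce at e
        rw [← hoffA x hx, ← hoffA' x hx]
        exact e
      have mixed : ∀ P Q : Fin (N+1+1) → ℕ, P ∈ F₁ → Q ∈ F₁ →
          ((fun x => if P x = c then c + 1 else P x) = fun x => if Q x = c then c + 1 else Q x) →
          (fun x => if P x = c then c + 1 else P x) = P → Q 0 = c → False := by
        intro P Q hPF hQF hE hPid hQ0
        have hoffQ := (image_cases (hsep Q hQF.1) rfl).1
        have hPc : P = Fin.cons (c+1) (Fin.tail Q) := by
          funext x
          rcases Fin.eq_zero_or_eq_succ x with rfl | ⟨x', rfl⟩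
          · have e1 := congrFun hPid 0
            have e2 := congrFun hE 0
            simp only [if_pos hQ0] at e2
            rw [Fin.cons_zero, ← e1, e2]
          · have e1 := congrFun hPid x'.succ
            have e2 := congrFun hE x'.succ
            rw [hoffQ x'.succ (Fin.succ_ne_zero x')] at e2
            rw [Fin.cons_succ]
            show P x'.succ = Q x'.succ
            rw [← e1, e2]
        exact hQF.2 ⟨hQ0, Or.inr (hPc ▸ hPF.1)⟩
      rcases hcA with ⟨hBA, h0⟩ | ⟨h0, hB0⟩ <;> rcases hcA' with ⟨hBA', h0'⟩ | ⟨h0', hB0'⟩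
      · rw [← hBA, ← hBA']; exact hEq
      · exact (mixed A A' hA hA' hEq hBA h0').elim
      · exact (mixed A' A hA' hA hEq.symm hBA' h0).elim
      · funext x
        by_cases hx : x = 0
        · subst hx; rw [h0, h0']
        · exact hoff x hx
  have key2 : (F \ F₁).ncard ≤ (minusC c F).ncard := by
    refine Set.ncard_le_ncard_of_injOn Fin.tail ?_ ?_ hMfin
    · rintro A ⟨hAF, hAP⟩
      have hcond : A 0 = c ∧ (A 1 = c + 2 ∨ Fin.cons (c+1) (Fin.tail A) ∈ F) := by
        by_contra hcc
        exact hAP ⟨hAF, hcc⟩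
      obtain ⟨h0, hor⟩ := hcond
      have hself : Fin.cons c (Fin.tail A) = A := by
        rw [← h0]; exact Fin.cons_self_tail A
      refine ⟨by rw [hself]; exact hAF, ?_⟩
      rcases hor with h | h
      · right
        refine ⟨0, ?_⟩
        show A (Fin.succ 0) = c + 2
        rwa [Fin.succ_zero_eq_one']
      · left; exact h
    · intro A hA A' hA' hEq
      have h0 : A 0 = c := by
        by_contra hcc
        exact hA.2 ⟨hA.1, fun hh => hcc hh.1⟩
      have h0' : A' 0 = c := by
        by_contra hcc
        exact hA'.2 ⟨hA'.1, fun hh => hcc hh.1⟩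
      have : Fin.cons (A 0) (Fin.tail A) = Fin.cons (A' 0) (Fin.tail A') := by
        rw [h0, h0', hEq]
      rwa [Fin.cons_self_tail, Fin.cons_self_tail] at this
  have hdiff := Set.ncard_diff_add_ncard_of_subset hsub hFfin
  omega
/-! ### the upper bound on non-intertwining families -/

lemma sep_bound (m t : ℕ) : ∀ (c n : ℕ) (F : Set (Fin (n+1) → ℕ)),
    m + 1 ≤ c + t → (∀ A ∈ F, SepC c m A) → NonIntw F →
    F.ncard ≤ Nat.choose (t - n - 1) n := by
  induction t using Nat.strong_induction_on with
  | _ t IH =>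
  intro c n F hmt hsep hni
  rcases F.eq_empty_or_nonempty with rfl | ⟨A₀, hA₀⟩
  · simp
  -- the ground range is long enough
  have hrange : c + 2 * n ≤ m := by
    have h1 := sep_step (hsep A₀ hA₀).2 n 0 (Fin.last n) (by simp [Fin.last])
    have h2 := ((hsep A₀ hA₀).1 0).1
    have h3 := ((hsep A₀ hA₀).1 (Fin.last n)).2
    omega
  have ht : 2 * n + 1 ≤ t := by omega
  cases n with
  | zero =>
    -- at most one tuple
    have hsub : F.Subsingleton := by
      intro A hA B hB
      by_contra hne
      have h0 : A 0 ≠ B 0 := by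
        intro h
        exact hne (funext fun x => by
          have hx : x = 0 := Fin.ext (by omega)
          rw [hx, h])
      have mkIntw : ∀ (U V : Fin 1 → ℕ), U 0 < V 0 → Intw U V := by
        intro U V hUV
        constructor
        · intro i
          have hi : i = 0 := Fin.ext (by omega)
          rw [hi]; exact hUV
        · intro i j hij
          exact absurd hij (by have := i.2; have := j.2; omega)
      rcases lt_trichotomy (A 0) (B 0) with h | h | h
      · exact hni A hA B hB (mkIntw A B h)
      · exact h0 h
      · exact hni B hB A hA (mkIntw B A h)
    rcases hsub.eq_empty_or_singleton with rfl | ⟨a, rfl⟩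
    · simp
    · simp [Set.ncard_singleton]
  | succ k =>
    have hd := card_split F hsep
    have h1 : (divC c m F).ncard ≤ Nat.choose ((t-1) - (k+1) - 1) (k+1) := by
      refine IH (t-1) (by omega) (c+1) (k+1) (divC c m F) (by omega) (divC_sep hsep)
        (divC_nonIntw hsep hni)
    have h2 : (minusC c F).ncard ≤ Nat.choose ((t-2) - k - 1) k := by
      refine IH (t-2) (by omega) (c+2) k (minusC c F) (by omega) (minusC_sep hsep)
        (minusC_nonIntw hsep hni)
    have e1 : (t-1) - (k+1) - 1 = t - k - 3 := by omega
    have e2 : (t-2) - k - 1 = t - k - 3 := by omega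
    have e3 : t - (k+1) - 1 = (t - k - 3) + 1 := by omega
    rw [e1] at h1
    rw [e2] at h2
    rw [e3, Nat.choose_succ_succ]
    simp only [Nat.succ_eq_add_one]
    omega
/-! ### transfer lemmas between `X` and `Y` -/

section Transfer

variable {e m : ℕ} {X Y : Set (Fin (e+1+1) → ℕ)}

/-- Entries of a separated tail are all ≥ its first entry. -/
lemma tail_sep {T : Fin (e+1) → ℕ} (a : ℕ) (hs : SepC 1 m (Fin.cons a T)) :
    SepC 1 m T ∧ a + 2 ≤ T 0 :=
  ⟨((sepC_cons_iff a T).mp hs).2.2, ((sepC_cons_iff a T).mp hs).2.1⟩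

lemma cons_at_one {a : ℕ} (T : Fin (e+1) → ℕ) :
    (Fin.cons a T : Fin (e+1+1) → ℕ) 1 = T 0 := by
  rw [← Fin.succ_zero_eq_one', Fin.cons_succ]

lemma mem_of_ge3 (hXsep : ∀ A ∈ X, SepTuple (e+1) m A) (hYsep : ∀ A ∈ Y, SepTuple (e+1) m A)
    (h1 : divOne (e+1) m X = divOne (e+1) m Y) :
    ∀ A ∈ X, 3 ≤ A 0 → A ∈ Y := by
  intro A hA h3
  have hAs : SepC 1 m A := hXsep A hA
  obtain ⟨hoff, hcase⟩ := image_cases (c := 1) hAs rfl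
  have hid : (fun x => if A x = 1 then 1 + 1 else A x) = A := by
    rcases hcase with ⟨hBA, -⟩ | ⟨h0, -⟩
    · exact hBA
    · omega
  have hmem : A ∈ divC 1 m X := ⟨hAs, A, hA, hid.symm⟩
  rw [← divOne_eq, h1, divOne_eq] at hmem
  obtain ⟨hBs, A', hA', himg⟩ := hmem
  obtain ⟨hoff', hcase'⟩ := image_cases (c := 1) (hYsep A' hA') himg
  rcases hcase' with ⟨hBA', -⟩ | ⟨h0', hB0'⟩
  · rw [hBA']; exact hA'
  · omega

lemma or_trans (hm : 2 ≤ m) (hXsep : ∀ A ∈ X, SepTuple (e+1) m A)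
    (hYsep : ∀ A ∈ Y, SepTuple (e+1) m A)
    (h1 : divOne (e+1) m X = divOne (e+1) m Y) {T : Fin (e+1) → ℕ} (hT4 : 4 ≤ T 0)
    (h : Fin.cons 1 T ∈ X ∨ Fin.cons 2 T ∈ X) :
    Fin.cons 1 T ∈ Y ∨ Fin.cons 2 T ∈ Y := by
  have hTs : SepC 1 m T := by
    rcases h with h | h
    · exact (tail_sep 1 (hXsep _ h)).1
    · exact (tail_sep 2 (hXsep _ h)).1
  have hTge : ∀ x, 4 ≤ T x := by
    intro x
    have := sep_le_all hTs x
    omega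
  have hB2 : SepC 1 m (Fin.cons 2 T) := by
    rw [sepC_cons_iff]
    exact ⟨⟨by omega, hm⟩, by omega, hTs⟩
  have hmem : Fin.cons 2 T ∈ divC 1 m X := by
    refine ⟨hB2, ?_⟩
    rcases h with h | h
    · refine ⟨Fin.cons 1 T, h, ?_⟩
      funext x
      rcases Fin.eq_zero_or_eq_succ x with rfl | ⟨x', rfl⟩
      · simp
      · simp only [Fin.cons_succ]
        rw [if_neg (by have := hTge x'; omega)]
    · refine ⟨Fin.cons 2 T, h, ?_⟩
      funext x
      rcases Fin.eq_zero_or_eq_succ x with rfl | ⟨x', rfl⟩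
      · simp
      · simp only [Fin.cons_succ]
        rw [if_neg (by have := hTge x'; omega)]
  rw [← divOne_eq, h1, divOne_eq] at hmem
  obtain ⟨hBs, A', hA', himg⟩ := hmem
  obtain ⟨hoff', hcase'⟩ := image_cases (c := 1) (hYsep A' hA') himg
  rcases hcase' with ⟨hBA', -⟩ | ⟨h0', hB0'⟩
  · right; rw [hBA']; exact hA'
  · left
    have : A' = Fin.cons 1 T := by
      funext x
      rcases Fin.eq_zero_or_eq_succ x with rfl | ⟨x', rfl⟩
      · rw [Fin.cons_zero, h0']
      · rw [Fin.cons_succ, ← hoff' x'.succ (Fin.succ_ne_zero x')]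
        show (Fin.cons 2 T : Fin (e+1+1) → ℕ) x'.succ = T x'
        rw [Fin.cons_succ]
    rwa [this] at hA'
  -- done

lemma and_trans (hXsep : ∀ A ∈ X, SepTuple (e+1) m A)
    (h2 : minus12 (e+1) X = minus12 (e+1) Y) {T : Fin (e+1) → ℕ} (hT4 : 4 ≤ T 0)
    (hc1 : Fin.cons 1 T ∈ X) (hc2 : Fin.cons 2 T ∈ X) :
    Fin.cons 1 T ∈ Y ∧ Fin.cons 2 T ∈ Y := by
  have hmem : T ∈ minus12 (e+1) X := ⟨hc1, Or.inl hc2⟩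
  rw [h2] at hmem
  obtain ⟨hy1, hy2⟩ := hmem
  refine ⟨hy1, ?_⟩
  rcases hy2 with h | ⟨x, hx⟩
  · exact h
  · exfalso
    have hTs : SepC 1 m T := (tail_sep 1 (hXsep _ hc1)).1
    have := sep_le_all hTs x
    omega

lemma mem3_trans (h2 : minus12 (e+1) X = minus12 (e+1) Y) {T : Fin (e+1) → ℕ}
    (hT3 : T 0 = 3) (h : Fin.cons 1 T ∈ X) : Fin.cons 1 T ∈ Y := by
  have hmem : T ∈ minus12 (e+1) X := ⟨h, Or.inr ⟨0, hT3⟩⟩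
  rw [h2] at hmem
  exact hmem.1

/-- The key step: there is no tuple on which `X` picks `2⋆T` while `Y` picks `1⋆T`. -/
lemma hard (hm : 2*(e+1)+1 ≤ m)
    (hXsep : ∀ A ∈ X, SepTuple (e+1) m A) (hYsep : ∀ A ∈ Y, SepTuple (e+1) m A)
    (hXni : NonIntw X) (hYni : NonIntw Y)
    (hXcard : X.ncard = (m - (e+1) - 1).choose (e+1))
    (h1 : divOne (e+1) m X = divOne (e+1) m Y) (h2 : minus12 (e+1) X = minus12 (e+1) Y) :
    ¬ ∃ T : Fin (e+1) → ℕ,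
      Fin.cons 2 T ∈ X ∧ Fin.cons 1 T ∉ X ∧ Fin.cons 1 T ∈ Y ∧ Fin.cons 2 T ∉ Y := by
  rintro ⟨T₀, hT₀⟩
  set S : Set (Fin (e+1) → ℕ) :=
    {T | Fin.cons 2 T ∈ X ∧ Fin.cons 1 T ∉ X ∧ Fin.cons 1 T ∈ Y ∧ Fin.cons 2 T ∉ Y} with hS
  have hSfin : S.Finite := by
    refine finite_of_bounded _ m (fun T hT x => ?_)
    have := ((hXsep _ hT.1).1 x.succ).2
    rwa [Fin.cons_succ] at this
  obtain ⟨T, hTS, hTmax⟩ :=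
    Set.Finite.exists_maximalFor (fun T : Fin (e+1) → ℕ => ∑ i, T i) S hSfin ⟨T₀, hT₀⟩
  obtain ⟨hx2, hx1, hy1, hy2⟩ := hTS
  have hT0 : 4 ≤ T 0 := by
    have := (tail_sep 2 (hXsep _ hx2)).2
    omega
  have hXfin : X.Finite := finite_of_bounded X m (fun A hA x => ((hXsep A hA).1 x).2)
  -- inserting `1⋆T` into `X` keeps it non-intertwining
  have hni' : NonIntw (insert (Fin.cons 1 T) X) := by
    intro U hU V hV hI
    rcases Set.mem_insert_iff.mp hU with rfl | hUX
    · rcases Set.mem_insert_iff.mp hV with rfl | hVX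
      · have := hI.1 0
        simp at this
      · by_cases hVY : V ∈ Y
        · exact hYni _ hy1 _ hVY hI
        · have hVs : SepC 1 m V := hXsep _ hVX
          have hV1 : 1 ≤ V 0 := (hVs.1 0).1
          have hV3 : V 0 < 3 := by
            by_contra hk
            exact hVY (mem_of_ge3 hXsep hYsep h1 V hVX (by omega))
          have hU0 : (Fin.cons 1 T : Fin (e+1+1) → ℕ) 0 < V 0 := hI.1 0
          rw [Fin.cons_zero] at hU0
          have hV0 : V 0 = 2 := by omega
          -- V = 2⋆T'
          obtain ⟨T', hVc⟩ : ∃ T' : Fin (e+1) → ℕ, V = Fin.cons 2 T' := by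
            refine ⟨Fin.tail V, ?_⟩
            conv_lhs => rw [← Fin.cons_self_tail V]
            rw [hV0]
          have hT'0 : 4 ≤ T' 0 := by
            have h12 : V 0 + 2 ≤ V 1 := hVs.2 0 1 (by simp)
            have hv1 : V 1 = T' 0 := by rw [hVc, cons_at_one]
            omega
          rw [hVc] at hVX hVY
          have h1T' : Fin.cons 1 T' ∉ X := by
            intro hc
            exact hVY (and_trans hXsep h2 hT'0 hc hVX).2
          have hyT' : Fin.cons 1 T' ∈ Y := by
            rcases or_trans (by omega) hXsep hYsep h1 hT'0 (Or.inr hVX) with h | h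
            · exact h
            · exact absurd h hVY
          have hT'S : T' ∈ S := ⟨hVX, h1T', hyT', hVY⟩
          have hITT : Intw T T' := ((intw_cons_iff 1 2 T T').mp (hVc ▸ hI)).2.2
          have hsum : ∑ i, T i < ∑ i, T' i :=
            Finset.sum_lt_sum_of_nonempty Finset.univ_nonempty (fun i _ => hITT.1 i)
          have : ∑ i, T' i ≤ ∑ i, T i := hTmax (j := T') hT'S hsum.le
          omega
    · rcases Set.mem_insert_iff.mp hV with rfl | hVX
      · have hlt := hI.1 0
        rw [Fin.cons_zero] at hlt
        have := ((hXsep _ hUX).1 0).1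
        omega
      · exact hXni _ hUX _ hVX hI
  have hsep' : ∀ A ∈ insert (Fin.cons 1 T) X, SepC 1 m A := by
    intro A hA
    rcases Set.mem_insert_iff.mp hA with rfl | hAX
    · exact hYsep _ hy1
    · exact hXsep _ hAX
  have hb := sep_bound m m 1 (e+1) (insert (Fin.cons 1 T) X) (by omega) hsep' hni'
  rw [Set.ncard_insert_of_notMem hx1 hXfin, hXcard] at hb
  omega

/-- One inclusion of the main theorem. -/
lemma subset_aux (hm : 2*(e+1)+1 ≤ m)
    (hXsep : ∀ A ∈ X, SepTuple (e+1) m A) (hYsep : ∀ A ∈ Y, SepTuple (e+1) m A)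
    (hXni : NonIntw X) (hYni : NonIntw Y)
    (hXcard : X.ncard = (m - (e+1) - 1).choose (e+1))
    (hYcard : Y.ncard = (m - (e+1) - 1).choose (e+1))
    (h1 : divOne (e+1) m X = divOne (e+1) m Y) (h2 : minus12 (e+1) X = minus12 (e+1) Y) :
    X ⊆ Y := by
  intro A hA
  have hAs : SepC 1 m A := hXsep A hA
  have h1le : 1 ≤ A 0 := (hAs.1 0).1
  by_cases h3 : 3 ≤ A 0
  · exact mem_of_ge3 hXsep hYsep h1 A hA h3
  have hgap : A 0 + 2 ≤ A 1 := hAs.2 0 1 (by simp)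
  have htl : Fin.tail A 0 = A 1 := by
    show A (Fin.succ 0) = A 1
    rw [Fin.succ_zero_eq_one']
  rcases (by omega : A 0 = 1 ∨ A 0 = 2) with h0 | h0
  · obtain ⟨T, hAc⟩ : ∃ T : Fin (e+1) → ℕ, A = Fin.cons 1 T := by
      refine ⟨Fin.tail A, ?_⟩
      conv_lhs => rw [← Fin.cons_self_tail A]
      rw [h0]
    have hT0 : 3 ≤ T 0 := by
      have hv1 : A 1 = T 0 := by rw [hAc, cons_at_one]
      omega
    by_cases hT3 : T 0 = 3
    · rw [hAc]
      exact mem3_trans h2 hT3 (hAc ▸ hA)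
    · have hT4 : 4 ≤ T 0 := by omega
      by_contra hAY
      rw [hAc] at hA hAY
      have h2X : Fin.cons 2 T ∉ X := by
        intro hc
        exact hAY (and_trans hXsep h2 hT4 hA hc).1
      have h2Y : Fin.cons 2 T ∈ Y := by
        rcases or_trans (by omega) hXsep hYsep h1 hT4 (Or.inl hA) with h | h
        · exact absurd h hAY
        · exact h
      exact hard hm hYsep hXsep hYni hXni hYcard h1.symm h2.symm ⟨T, h2Y, hAY, hA, h2X⟩
  · obtain ⟨T, hAc⟩ : ∃ T : Fin (e+1) → ℕ, A = Fin.cons 2 T := by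
      refine ⟨Fin.tail A, ?_⟩
      conv_lhs => rw [← Fin.cons_self_tail A]
      rw [h0]
    have hT4 : 4 ≤ T 0 := by
      have hv1 : A 1 = T 0 := by rw [hAc, cons_at_one]
      omega
    by_contra hAY
    rw [hAc] at hA hAY
    have h1X : Fin.cons 1 T ∉ X := by
      intro hc
      exact hAY (and_trans hXsep h2 hT4 hc hA).2
    have h1Y : Fin.cons 1 T ∈ Y := by
      rcases or_trans (by omega) hXsep hYsep h1 hT4 (Or.inr hA) with h | h
      · exact h
      · exact absurd h hAY
    exact hard hm hXsep hYsep hXni hYni hXcard h1 h2 ⟨T, hA, h1X, h1Y, hAY⟩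

end Transfer

end SepAux

/-- Two maximal-size non-intertwining sets of separated `(d+1)`-tuples with the same `X/1`
and `X∖{1,2}` coincide. -/
theorem eq_of_divOne_minus12_eq (d m : ℕ) (hd : 0 < d) (hm : 2*d+1 ≤ m)
    (X Y : Set (Fin (d+1) → ℕ))
    (hXsep : ∀ A ∈ X, SepTuple d m A) (hYsep : ∀ A ∈ Y, SepTuple d m A)
    (hXni : NonIntw X) (hYni : NonIntw Y)
    (hXcard : X.ncard = (m - d - 1).choose d) (hYcard : Y.ncard = (m - d - 1).choose d)
    (h1 : divOne d m X = divOne d m Y) (h2 : minus12 d X = minus12 d Y) :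
    X = Y := by
  obtain ⟨e, rfl⟩ : ∃ e, d = e + 1 := ⟨d - 1, by omega⟩
  apply Set.Subset.antisymm
  · exact SepAux.subset_aux hm hXsep hYsep hXni hYni hXcard hYcard h1 h2
  · exact SepAux.subset_aux hm hYsep hXsep hYni hXni hYcard hXcard h1.symm h2.symm
end
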